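/- arXiv:1601.02724 — 9 statements merged into one kernel-verified Lean document; each statement's English description precedes it below -/
import Mathlib

section
/- If X = (x, y, z) : ℝ → ℝ³ is a solution of the 1-1-1 ABC flow system and c ∈ ℝ, then the curve t ↦ (-x(c - t), y(c - t), π - z(c - t)) is also a solution of the 1-1-1 ABC flow system. -/
open Real Set Filter

/-- A solution of the 1-1-1 ABC flow system. -/
def IsABCSol (x y z : ℝ → ℝ) : Prop :=
  ∀ t : ℝ,
    HasDerivAt x (Real.sin (z t) + Real.cos (y t)) t ∧
    HasDerivAt y (Real.sin (x t) + Real.cos (z t)) t ∧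
    HasDerivAt z (Real.sin (y t) + Real.cos (x t)) t

theorem stmt5 (x y z : ℝ → ℝ) (h : IsABCSol x y z) (c : ℝ) :
    IsABCSol (fun t => -x (c - t)) (fun t => y (c - t)) (fun t => π - z (c - t)) := by
  intro t
  have hs : HasDerivAt (fun t : ℝ => c - t) (-1) t := by
    simpa [Pi.sub_def] using (hasDerivAt_const t c).sub (hasDerivAt_id t)
  obtain ⟨hx, hy, hz⟩ := h (c - t)
  refine ⟨?_, ?_, ?_⟩
  · have := (hx.comp t hs).neg
    simpa [Real.sin_pi_sub, mul_comm, Function.comp_def, Pi.neg_def] using this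
  · have := hy.comp t hs
    simpa [Real.cos_pi_sub, neg_add, mul_comm, add_comm, Function.comp_def] using this
  · have := (hz.comp t hs).const_sub π
    simpa [mul_comm] using this
end

section
/- Let X = (x, y, z) : ℝ → ℝ³ be a solution of the 1-1-1 ABC flow system with X(0) = (-π/2, 0, a) for some a ∈ [0, π/2), and let T > 0 be such that X(t) ∈ D̄ for all t ∈ [0, T]. Then y(t) < π/4 for all t ∈ [0, T]. -/
open Real Set Filter

/-- The open triangle `R` in the `xy`-plane with vertices `(0, -π/2)`, `(0, 3π/2)`, `(-π, π/2)`. -/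
def triR : Set (ℝ × ℝ) :=
  {p | -(Real.pi / 2) < p.1 + p.2 ∧ p.2 - p.1 < 3 * Real.pi / 2 ∧ p.1 < 0}

/-- The open prism `D = R × (0, π/2)` in `ℝ³`. -/
def prismD : Set (ℝ × ℝ × ℝ) :=
  {p | (p.1, p.2.1) ∈ triR ∧ 0 < p.2.2 ∧ p.2.2 < Real.pi / 2}

/-- Closed bounds satisfied on the closure of the prism. -/
lemma closure_prismD_subset :
    closure prismD ⊆ {p : ℝ × ℝ × ℝ |
      -(Real.pi / 2) ≤ p.1 + p.2.1 ∧ p.1 ≤ 0 ∧ 0 ≤ p.2.2 ∧ p.2.2 ≤ Real.pi / 2} := by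
  apply closure_minimal
  · rintro ⟨px, py, pz⟩ ⟨⟨h1, _, h3⟩, h4, h5⟩
    exact ⟨le_of_lt h1, le_of_lt h3, le_of_lt h4, le_of_lt h5⟩
  · have heq : {p : ℝ × ℝ × ℝ |
        -(Real.pi / 2) ≤ p.1 + p.2.1 ∧ p.1 ≤ 0 ∧ 0 ≤ p.2.2 ∧ p.2.2 ≤ Real.pi / 2} =
        {p : ℝ × ℝ × ℝ | -(Real.pi / 2) ≤ p.1 + p.2.1} ∩
        ({p | p.1 ≤ 0} ∩ ({p | 0 ≤ p.2.2} ∩ {p | p.2.2 ≤ Real.pi / 2})) := rfl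
    rw [heq]
    exact (isClosed_le continuous_const (continuous_fst.add continuous_snd.fst)).inter
      ((isClosed_le continuous_fst continuous_const).inter
      ((isClosed_le continuous_const continuous_snd.snd).inter
      (isClosed_le continuous_snd.snd continuous_const)))

lemma sub_cos_le_neg_one {u : ℝ} (hu : u ≤ 0) : u - Real.cos u ≤ -1 := by
  have hmono : Monotone (fun u : ℝ => u - Real.cos u) := by
    apply monotone_of_hasDerivAt_nonneg (f' := fun u => 1 + Real.sin u)
    · intro u
      exact ((hasDerivAt_id' u).sub (Real.hasDerivAt_cos u)).congr_deriv (by ring)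
    · intro u
      show (0:ℝ) ≤ 1 + Real.sin u
      linarith [Real.neg_one_le_sin u]
  simpa using hmono hu

theorem stmt6 (x y z : ℝ → ℝ) (h : IsABCSol x y z) (a : ℝ) (ha : a ∈ Set.Ico 0 (π / 2))
    (hx0 : x 0 = -(π / 2)) (hy0 : y 0 = 0) (hz0 : z 0 = a)
    (T : ℝ) (hT : 0 < T) (hD : ∀ t ∈ Set.Icc 0 T, (x t, y t, z t) ∈ closure prismD) :
    ∀ t ∈ Set.Icc 0 T, y t < π / 4 := by
  have hpi := Real.pi_pos
  have hB : ∀ t ∈ Set.Icc 0 T, -(π / 2) ≤ x t + y t ∧ x t ≤ 0 ∧ 0 ≤ z t ∧ z t ≤ π / 2 :=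
    fun t ht => closure_prismD_subset (hD t ht)
  have hyc : Continuous y := continuous_iff_continuousAt.mpr fun t => (h t).2.1.continuousAt
  by_contra hcon
  push_neg at hcon
  obtain ⟨t0, ht0, hyt0⟩ := hcon
  set S : Set ℝ := Set.Icc 0 T ∩ y ⁻¹' Set.Ici (π / 4) with hS
  have hSclosed : IsClosed S := isClosed_Icc.inter (isClosed_Ici.preimage hyc)
  have hne : S.Nonempty := ⟨t0, ht0, hyt0⟩
  have hbdd : BddBelow S := ⟨0, fun s hs => hs.1.1⟩
  set t1 := sInf S with ht1def
  have ht1S : t1 ∈ S := hSclosed.csInf_mem hne hbdd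
  have ht1pos : 0 < t1 := by
    rcases lt_or_eq_of_le ht1S.1.1 with h0 | h0
    · exact h0
    · exfalso
      have : (π / 4 : ℝ) ≤ y 0 := by rw [h0]; exact ht1S.2
      rw [hy0] at this; linarith
  have hlt : ∀ t, 0 ≤ t → t < t1 → y t < π / 4 := by
    intro t ht htlt
    by_contra hge
    push_neg at hge
    have : t ∈ S := ⟨⟨ht, le_trans htlt.le ht1S.1.2⟩, hge⟩
    exact absurd (csInf_le hbdd this) (not_le.mpr htlt)
  have hy1le : y t1 ≤ π / 4 := by
    refine le_of_tendsto (x := nhdsWithin t1 (Set.Iio t1))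
      (hyc.continuousAt.tendsto.mono_left nhdsWithin_le_nhds) ?_
    filter_upwards [Ioo_mem_nhdsLT ht1pos] with t ht
    exact (hlt t ht.1.le ht.2).le
  have hy1 : y t1 = π / 4 := le_antisymm hy1le ht1S.2
  have hsub : Set.Icc 0 t1 ⊆ Set.Icc 0 T := Set.Icc_subset_Icc le_rfl ht1S.1.2
  set G : ℝ → ℝ := fun t => x t - Real.cos (x t) - Real.sin (y t) with hGdef
  have hG' : ∀ t, HasDerivAt G
      ((1 + Real.sin (x t)) * Real.sin (z t) + (1 - Real.cos (z t)) * Real.cos (y t)) t := by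
    intro t
    obtain ⟨hx, hy, hz⟩ := h t
    have h1 : HasDerivAt (fun t => Real.cos (x t))
        (-Real.sin (x t) * (Real.sin (z t) + Real.cos (y t))) t :=
      (Real.hasDerivAt_cos (x t)).comp t hx
    have h2 : HasDerivAt (fun t => Real.sin (y t))
        (Real.cos (y t) * (Real.sin (x t) + Real.cos (z t))) t :=
      (Real.hasDerivAt_sin (y t)).comp t hy
    have := (hx.sub h1).sub h2
    exact this.congr_deriv (by ring)
  have hmono : MonotoneOn G (Set.Icc 0 t1) := by
    apply monotoneOn_of_deriv_nonneg (convex_Icc 0 t1)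
    · exact (continuous_iff_continuousAt.mpr fun t => (hG' t).continuousAt).continuousOn
    · exact fun t _ => (hG' t).differentiableAt.differentiableWithinAt
    · intro t ht
      rw [interior_Icc] at ht
      rw [(hG' t).deriv]
      have htT : t ∈ Set.Icc 0 T := hsub ⟨ht.1.le, ht.2.le⟩
      obtain ⟨hb1, hb2, hb3, hb4⟩ := hB t htT
      have hylt : y t < π / 4 := hlt t ht.1.le ht.2
      have hyge : -(π / 2) ≤ y t := by linarith
      have hsz : 0 ≤ Real.sin (z t) :=
        Real.sin_nonneg_of_nonneg_of_le_pi hb3 (by linarith)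
      have hcz : Real.cos (z t) ≤ 1 := Real.cos_le_one _
      have hcy : 0 ≤ Real.cos (y t) :=
        Real.cos_nonneg_of_mem_Icc ⟨hyge, by linarith⟩
      have hsx := Real.neg_one_le_sin (x t)
      exact add_nonneg (mul_nonneg (by linarith) hsz) (mul_nonneg (by linarith) hcy)
  have hineq : G 0 ≤ G t1 :=
    hmono ⟨le_rfl, ht1pos.le⟩ ⟨ht1pos.le, le_rfl⟩ ht1pos.le
  have hG0 : G 0 = -(π / 2) := by
    simp [hGdef, hx0, hy0, Real.cos_neg, Real.cos_pi_div_two]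
  have hGt1 : G t1 ≤ -1 - Real.sqrt 2 / 2 := by
    have hx1 : x t1 ≤ 0 := (hB t1 ht1S.1).2.1
    have hcc := sub_cos_le_neg_one hx1
    have : G t1 = x t1 - Real.cos (x t1) - Real.sqrt 2 / 2 := by
      rw [hGdef]; simp only [hy1, Real.sin_pi_div_four]
    rw [this]; linarith
  have h2 : (1.4 : ℝ) ≤ Real.sqrt 2 := by
    nlinarith [Real.sq_sqrt (by norm_num : (0:ℝ) ≤ 2), Real.sqrt_nonneg 2]
  have hpi' := Real.pi_lt_d2
  linarith [hG0 ▸ hineq]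
end

section
/- Let X = (x, y, z) : ℝ → ℝ³ be a solution of the 1-1-1 ABC flow system with X(0) = (-π/2, 0, 0), and let T > 0 be such that X(t) ∈ D̄ for all t ∈ [0, T]. Then x(t) + π/2 > z(t) for all t ∈ (0, T]. -/
open Real Set Filter

theorem stmt7 (x y z : ℝ → ℝ) (h : IsABCSol x y z)
    (hx0 : x 0 = -(π / 2)) (hy0 : y 0 = 0) (hz0 : z 0 = 0)
    (T : ℝ) (hT : 0 < T) (hD : ∀ t ∈ Set.Icc 0 T, (x t, y t, z t) ∈ closure prismD) :
    ∀ t ∈ Set.Ioc 0 T, x t + π / 2 > z t := by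
  -- continuity of the coordinates
  have hxc : Continuous x := Differentiable.continuous (fun t => (h t).1.differentiableAt)
  have hyc : Continuous y := Differentiable.continuous (fun t => (h t).2.1.differentiableAt)
  have hzc : Continuous z := Differentiable.continuous (fun t => (h t).2.2.differentiableAt)
  -- consequences of staying in the closure of the prism
  have hclos : ∀ t ∈ Set.Icc 0 T,
      -(π/2) ≤ x t + y t ∧ x t ≤ 0 ∧ 0 ≤ z t ∧ z t ≤ π/2 := by
    intro t ht
    have hsub : closure prismD ⊆
        {p : ℝ × ℝ × ℝ | -(π/2) ≤ p.1 + p.2.1 ∧ p.1 ≤ 0 ∧ 0 ≤ p.2.2 ∧ p.2.2 ≤ π/2} := by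
      apply closure_minimal
      · rintro ⟨a, b, c⟩ ⟨⟨h1, _, h3⟩, h4, h5⟩
        exact ⟨le_of_lt h1, le_of_lt h3, le_of_lt h4, le_of_lt h5⟩
      · have c1 : Continuous fun p : ℝ × ℝ × ℝ => p.1 + p.2.1 := by fun_prop
        have c2 : Continuous fun p : ℝ × ℝ × ℝ => p.1 := by fun_prop
        have c3 : Continuous fun p : ℝ × ℝ × ℝ => p.2.2 := by fun_prop
        simp only [Set.setOf_and]
        exact (isClosed_le continuous_const c1).inter ((isClosed_le c2 continuous_const).inter
          ((isClosed_le continuous_const c3).inter (isClosed_le c3 continuous_const)))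
    exact hsub (hD t ht)
  have hylb : ∀ t ∈ Set.Icc 0 T, -(π/2) ≤ y t := by
    intro t ht
    obtain ⟨h1, h2, _, _⟩ := hclos t ht
    linarith
  -- Step 1: y stays below π/4 on [0,T]
  have hyub : ∀ t ∈ Set.Icc 0 T, y t < π/4 := by
    by_contra hcon
    push_neg at hcon
    obtain ⟨t₁, ht₁, hyt₁⟩ := hcon
    set S : Set ℝ := Set.Icc 0 T ∩ y ⁻¹' Set.Ici (π/4) with hS
    have hSclosed : IsClosed S := isClosed_Icc.inter (isClosed_Ici.preimage hyc)
    have hSne : S.Nonempty := ⟨t₁, ht₁, hyt₁⟩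
    have hSbdd : BddBelow S := ⟨0, fun s hs => hs.1.1⟩
    set ts := sInf S with hts
    have htsS : ts ∈ S := hSclosed.csInf_mem hSne hSbdd
    have htsIcc : ts ∈ Set.Icc 0 T := htsS.1
    have hts0 : 0 < ts := by
      rcases lt_or_eq_of_le htsIcc.1 with h' | h'
      · exact h'
      · exfalso
        have := htsS.2
        simp only [Set.mem_preimage, Set.mem_Ici, ← h', hy0] at this
        linarith [Real.pi_pos]
    have hlt : ∀ s ∈ Set.Ico 0 ts, y s < π/4 := by
      intro s hs
      by_contra hge
      push_neg at hge
      have hsS : s ∈ S := ⟨⟨hs.1, le_trans hs.2.le htsIcc.2⟩, hge⟩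
      exact absurd (csInf_le hSbdd hsS) (not_le.mpr hs.2)
    -- at ts, y = π/4 coming from below, so on [0, ts], y ≤ π/4
    have hyts_le : y ts ≤ π/4 := by
      have htend : Tendsto y (nhdsWithin ts (Set.Iio ts)) (nhds (y ts)) :=
        (hyc.continuousAt).continuousWithinAt.tendsto
      refine le_of_tendsto htend ?_
      filter_upwards [Ioo_mem_nhdsLT_of_mem (show ts ∈ Set.Ioc 0 ts from ⟨hts0, le_refl _⟩)]
        with s hs
      exact (hlt s ⟨hs.1.le, hs.2⟩).le
    have hyle : ∀ s ∈ Set.Icc 0 ts, y s ≤ π/4 := by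
      intro s hs
      rcases lt_or_eq_of_le hs.2 with h' | h'
      · exact (hlt s ⟨hs.1, h'⟩).le
      · rw [h']; exact hyts_le
    -- the Lyapunov function K
    set K : ℝ → ℝ := fun s => Real.sin (y s) + Real.cos (x s) - x s - π/2 with hK
    have hKd : ∀ s : ℝ, HasDerivAt K
        (Real.cos (y s) * (Real.sin (x s) + Real.cos (z s)) +
          (-Real.sin (x s)) * (Real.sin (z s) + Real.cos (y s)) -
          (Real.sin (z s) + Real.cos (y s))) s := by
      intro s
      have h1 : HasDerivAt (fun u => Real.sin (y u))
          (Real.cos (y s) * (Real.sin (x s) + Real.cos (z s))) s :=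
        (Real.hasDerivAt_sin (y s)).comp s (h s).2.1
      have h2 : HasDerivAt (fun u => Real.cos (x u))
          ((-Real.sin (x s)) * (Real.sin (z s) + Real.cos (y s))) s :=
        (Real.hasDerivAt_cos (x s)).comp s (h s).1
      exact ((h1.add h2).sub (h s).1).sub_const (π/2)
    have hanti : AntitoneOn K (Set.Icc 0 ts) := by
      apply antitoneOn_of_deriv_nonpos (convex_Icc 0 ts)
      · exact Continuous.continuousOn (by fun_prop)
      · intro s _
        exact ((hKd s).differentiableAt).differentiableWithinAt
      · intro s hs
        rw [interior_Icc] at hs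
        rw [(hKd s).deriv]
        have hsT : s ∈ Set.Icc 0 T := ⟨hs.1.le, le_trans hs.2.le htsIcc.2⟩
        obtain ⟨_, _, hz1, hz2⟩ := hclos s hsT
        have hcy : 0 ≤ Real.cos (y s) := by
          apply Real.cos_nonneg_of_mem_Icc
          constructor
          · exact hylb s hsT
          · linarith [hyle s ⟨hs.1.le, hs.2.le⟩, Real.pi_pos]
        have hsz : 0 ≤ Real.sin (z s) :=
          Real.sin_nonneg_of_nonneg_of_le_pi hz1 (by linarith [Real.pi_pos])
        have hcz : Real.cos (z s) ≤ 1 := Real.cos_le_one _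
        have hsx : -1 ≤ Real.sin (x s) := Real.neg_one_le_sin _
        nlinarith [mul_nonneg hcy (sub_nonneg.mpr hcz),
          mul_nonneg hsz (by linarith : (0:ℝ) ≤ 1 + Real.sin (x s))]
    have hK0 : K 0 = 0 := by
      simp only [hK, hx0, hy0, Real.sin_zero, Real.cos_neg, Real.cos_pi_div_two]
      ring
    have hKts : K ts ≤ 0 := by
      rw [← hK0]
      exact hanti (Set.left_mem_Icc.mpr htsIcc.1) (Set.right_mem_Icc.mpr htsIcc.1) htsIcc.1
    -- conclude sin (y ts) ≤ π/2 - 1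
    have hxts : x ts ≤ 0 := (hclos ts htsIcc).2.1
    have hcosx : 1 + x ts ≤ Real.cos (x ts) := by
      rcases le_or_gt (-2) (x ts) with h2 | h2
      · nlinarith [Real.one_sub_sq_div_two_le_cos (x := x ts)]
      · nlinarith [Real.neg_one_le_cos (x ts)]
    have hsinb : Real.sin (y ts) ≤ π/2 - 1 := by
      simp only [hK] at hKts
      linarith
    have hyeq : y ts = π/4 := le_antisymm hyts_le htsS.2
    rw [hyeq, Real.sin_pi_div_four] at hsinb
    have h1 : π < 3.15 := Real.pi_lt_d2
    have h2 : (1.4:ℝ) < Real.sqrt 2 := by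
      rw [show (1.4:ℝ) = Real.sqrt 1.96 by
        rw [show (1.96:ℝ) = 1.4^2 by norm_num, Real.sqrt_sq]; norm_num]
      exact Real.sqrt_lt_sqrt (by norm_num) (by norm_num)
    linarith
  -- Step 2: the main first-crossing argument for w = x + π/2 - z
  set w : ℝ → ℝ := fun s => x s + π/2 - z s with hw
  have hwd : ∀ s : ℝ, HasDerivAt w
      (Real.sin (z s) + Real.cos (y s) - (Real.sin (y s) + Real.cos (x s))) s := by
    intro s
    exact ((h s).1.add_const (π/2)).sub (h s).2.2
  have hw0 : w 0 = 0 := by simp [hw, hx0, hz0]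
  have hwc : Continuous w := by fun_prop
  -- derivative at a point where w = 0 is cos y - sin y > 0
  have hderiv_pos : ∀ s ∈ Set.Icc 0 T, w s = 0 →
      0 < Real.sin (z s) + Real.cos (y s) - (Real.sin (y s) + Real.cos (x s)) := by
    intro s hs hws
    have hzs : z s = x s + π/2 := by simp only [hw] at hws; linarith
    rw [hzs, Real.sin_add_pi_div_two]
    have hylt : y s < π/4 := hyub s hs
    have hyge : -(π/2) ≤ y s := hylb s hs
    have h3 : 0 < Real.cos (y s + π/4) :=
      Real.cos_pos_of_mem_Ioo ⟨by linarith [Real.pi_pos], by linarith⟩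
    rw [Real.cos_add, Real.cos_pi_div_four, Real.sin_pi_div_four] at h3
    nlinarith [Real.sq_sqrt (by norm_num : (2:ℝ) ≥ 0), Real.sqrt_nonneg 2]
  -- positivity of w near 0
  have hw_near0 : ∀ᶠ s in nhdsWithin 0 (Set.Ioi 0), 0 < w s := by
    have hd0 := hwd 0
    rw [hx0, hy0, hz0] at hd0
    simp only [Real.sin_zero, Real.cos_zero, Real.cos_neg, Real.cos_pi_div_two] at hd0
    norm_num at hd0
    rw [hasDerivAt_iff_tendsto_slope] at hd0
    have hev : ∀ᶠ s in nhdsWithin 0 {(0:ℝ)}ᶜ, 0 < slope w 0 s :=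
      hd0.eventually (eventually_gt_nhds (by norm_num))
    have hev2 : ∀ᶠ s in nhdsWithin 0 (Set.Ioi 0), 0 < slope w 0 s :=
      hev.filter_mono (nhdsWithin_mono 0 (fun s hs => ne_of_gt hs))
    filter_upwards [hev2, self_mem_nhdsWithin] with s hsl hmem
    have : slope w 0 s = w s / s := by
      simp [slope_def_field, hw0]
    rw [this] at hsl
    have hs0 : 0 < s := hmem
    have hmul := mul_pos hsl hs0
    rwa [div_mul_cancel₀ _ (ne_of_gt hs0)] at hmul
  obtain ⟨u, hu, husub⟩ := mem_nhdsGT_iff_exists_Ioo_subset.mp hw_near0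
  have hu0 : (0:ℝ) < u := hu
  -- main argument
  intro t ht
  by_contra hcon
  push_neg at hcon
  have hwt : w t ≤ 0 := by simp only [hw]; linarith
  have hut : u ≤ t := by
    by_contra hlt
    push_neg at hlt
    have : 0 < w t := husub ⟨ht.1, hlt⟩
    linarith
  set S : Set ℝ := Set.Icc (u/2) t ∩ w ⁻¹' Set.Iic 0 with hS
  have hSclosed : IsClosed S := isClosed_Icc.inter (isClosed_Iic.preimage hwc)
  have hSne : S.Nonempty := ⟨t, ⟨by linarith, le_refl _⟩, hwt⟩
  have hSbdd : BddBelow S := ⟨u/2, fun s hs => hs.1.1⟩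
  set ts := sInf S with hts
  have htsS : ts ∈ S := hSclosed.csInf_mem hSne hSbdd
  have hts0 : 0 < ts := lt_of_lt_of_le (by linarith) htsS.1.1
  have htsT : ts ∈ Set.Icc 0 T := ⟨hts0.le, le_trans htsS.1.2 ht.2⟩
  have hpos : ∀ s ∈ Set.Ioo 0 ts, 0 < w s := by
    intro s hs
    rcases le_or_gt s (u/2) with h' | h'
    · exact husub ⟨hs.1, by linarith [htsS.1.1, hs.2]⟩
    · by_contra hle
      push_neg at hle
      have hsS : s ∈ S := ⟨⟨h'.le, le_trans hs.2.le htsS.1.2⟩, hle⟩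
      exact absurd (csInf_le hSbdd hsS) (not_le.mpr hs.2)
  have hwts0 : w ts = 0 := by
    have htend : Tendsto w (nhdsWithin ts (Set.Iio ts)) (nhds (w ts)) :=
      (hwc.continuousAt).continuousWithinAt.tendsto
    have hge : 0 ≤ w ts := by
      refine ge_of_tendsto htend ?_
      filter_upwards [Ioo_mem_nhdsLT_of_mem (show ts ∈ Set.Ioc 0 ts from ⟨hts0, le_refl _⟩)]
        with s hs
      exact (hpos s hs).le
    exact le_antisymm htsS.2 hge
  -- derivative at ts is positive, contradiction with approach from the left
  have hdpos := hderiv_pos ts htsT hwts0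
  have hdts := hwd ts
  rw [hasDerivAt_iff_tendsto_slope] at hdts
  have hev : ∀ᶠ s in nhdsWithin ts {ts}ᶜ, 0 < slope w ts s :=
    hdts.eventually (eventually_gt_nhds hdpos)
  have hev2 : ∀ᶠ s in nhdsWithin ts (Set.Iio ts), 0 < slope w ts s :=
    hev.filter_mono (nhdsWithin_mono ts (fun s hs => ne_of_lt hs))
  have hev3 : ∀ᶠ s in nhdsWithin ts (Set.Iio ts), s ∈ Set.Ioo 0 ts :=
    Ioo_mem_nhdsLT_of_mem ⟨hts0, le_refl ts⟩
  obtain ⟨s, hsl, hsIoo⟩ := (hev2.and hev3).exists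
  have hwspos := hpos s hsIoo
  have hslope : slope w ts s = w s / (s - ts) := by
    simp [slope_def_field, hwts0]
  rw [hslope] at hsl
  have : w s / (s - ts) < 0 := div_neg_of_pos_of_neg hwspos (by linarith [hsIoo.2])
  linarith
end

section
/- Let X = (x, y, z) : ℝ → ℝ³ be a solution of the 1-1-1 ABC flow system with X(0) = (-π/2, 0, a) for some a ∈ [0, π/2). Then there exists ε > 0 such that X(t) ∈ D for all t ∈ (0, ε). -/
open Real Set Filter Topology

/-- If `f 0 = 0` and `f' (0) > 0`, then `f > 0` just to the right of `0`. -/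
lemma pos_right {f : ℝ → ℝ} {f' : ℝ} (hf : HasDerivAt f f' 0) (h0 : f 0 = 0) (hp : 0 < f') :
    ∀ᶠ t in 𝓝[>] (0:ℝ), 0 < f t := by
  have hsl := hasDerivAt_iff_tendsto_slope.mp hf
  have h2 : ∀ᶠ t in 𝓝[≠] (0:ℝ), 0 < slope f 0 t := hsl.eventually (eventually_gt_nhds hp)
  have hle : 𝓝[>] (0:ℝ) ≤ 𝓝[≠] (0:ℝ) :=
    nhdsWithin_mono _ (fun t ht => ne_of_gt ht)
  filter_upwards [h2.filter_mono hle, self_mem_nhdsWithin] with t ht ht'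
  have hs : slope f 0 t = f t / t := by
    simp [slope_def_field, h0]
  rw [hs] at ht
  have htp : (0:ℝ) < t := ht'
  have := mul_pos ht htp
  rwa [div_mul_cancel₀ _ (ne_of_gt htp)] at this

theorem stmt9 (x y z : ℝ → ℝ) (h : IsABCSol x y z) (a : ℝ) (ha : a ∈ Set.Ico 0 (π / 2))
    (hx0 : x 0 = -(π / 2)) (hy0 : y 0 = 0) (hz0 : z 0 = a) :
    ∃ ε > (0 : ℝ), ∀ t ∈ Set.Ioo 0 ε, (x t, y t, z t) ∈ prismD := by
  obtain ⟨ha0, ha1⟩ := ha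
  have hpi : (0:ℝ) < π := Real.pi_pos
  have hdx : ∀ t, HasDerivAt x (Real.sin (z t) + Real.cos (y t)) t := fun t => (h t).1
  have hdy : ∀ t, HasDerivAt y (Real.sin (x t) + Real.cos (z t)) t := fun t => (h t).2.1
  have hdz : ∀ t, HasDerivAt z (Real.sin (y t) + Real.cos (x t)) t := fun t => (h t).2.2
  have hcx : Continuous x := Differentiable.continuous (fun t => (hdx t).differentiableAt)
  have hcy : Continuous y := Differentiable.continuous (fun t => (hdy t).differentiableAt)
  have hcz : Continuous z := Differentiable.continuous (fun t => (hdz t).differentiableAt)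
  -- condition A : x + y > -π/2 via derivative sin a + cos a > 0
  have hsca : 0 < Real.sin a + Real.cos a := by
    have h1 : 0 ≤ Real.sin a :=
      Real.sin_nonneg_of_nonneg_of_le_pi ha0 (by linarith)
    have h2 : 0 < Real.cos a := Real.cos_pos_of_mem_Ioo ⟨by linarith, ha1⟩
    linarith
  have hdf : HasDerivAt (fun t => x t + y t + π / 2)
      ((Real.sin (z 0) + Real.cos (y 0)) + (Real.sin (x 0) + Real.cos (z 0))) 0 :=
    ((hdx 0).add (hdy 0)).add_const _
  have hA : ∀ᶠ t in 𝓝[>] (0:ℝ), 0 < x t + y t + π / 2 := by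
    apply pos_right hdf
    · rw [hx0, hy0]; ring
    · rw [hx0, hy0, hz0, Real.cos_zero, Real.sin_neg, Real.sin_pi_div_two]
      linarith
  -- conditions by continuity
  have hB : ∀ᶠ t in 𝓝 (0:ℝ), y t - x t < 3 * π / 2 :=
    ((hcy.sub hcx).continuousAt).eventually_lt continuousAt_const
      (by rw [Pi.sub_apply, hy0, hx0]; linarith)
  have hC : ∀ᶠ t in 𝓝 (0:ℝ), x t < 0 :=
    (hcx.continuousAt).eventually_lt continuousAt_const (by rw [hx0]; linarith)
  have hD : ∀ᶠ t in 𝓝 (0:ℝ), z t < π / 2 :=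
    (hcz.continuousAt).eventually_lt continuousAt_const (by rw [hz0]; exact ha1)
  -- condition E : 0 < z
  have hE : ∀ᶠ t in 𝓝[>] (0:ℝ), 0 < z t := by
    rcases eq_or_lt_of_le ha0 with hae | hae
    · -- a = 0 : second order argument, z' = sin∘y + cos∘x has positive derivative at 0
      have hdg : HasDerivAt (fun t => Real.sin (y t) + Real.cos (x t))
          (Real.cos (y 0) * (Real.sin (x 0) + Real.cos (z 0)) +
            (-Real.sin (x 0)) * (Real.sin (z 0) + Real.cos (y 0))) 0 :=
        ((hdy 0).sin).add ((hdx 0).cos)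
      have hg : ∀ᶠ t in 𝓝[>] (0:ℝ), 0 < Real.sin (y t) + Real.cos (x t) := by
        apply pos_right hdg
        · rw [hy0, hx0, Real.sin_zero, Real.cos_neg, Real.cos_pi_div_two]; ring
        · rw [hx0, hy0, hz0, ← hae]
          simp [Real.sin_neg]
      obtain ⟨δ, hδ, hsub⟩ := mem_nhdsGT_iff_exists_Ioo_subset.mp hg
      have hδ0 : (0:ℝ) < δ := hδ
      have key : ∀ t ∈ Ioo (0:ℝ) δ, 0 < z t := by
        intro t ht
        have hmono : StrictMonoOn z (Icc 0 t) := by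
          apply strictMonoOn_of_deriv_pos (convex_Icc 0 t) hcz.continuousOn
          intro s hs
          rw [interior_Icc] at hs
          rw [(hdz s).deriv]
          exact hsub ⟨hs.1, lt_trans hs.2 ht.2⟩
        have := hmono (left_mem_Icc.mpr ht.1.le) (right_mem_Icc.mpr ht.1.le) ht.1
        rwa [hz0, ← hae] at this
      exact mem_of_superset (Ioo_mem_nhdsGT_of_mem ⟨le_refl 0, hδ0⟩) key
    · exact (continuousAt_const.eventually_lt hcz.continuousAt
        (by rw [hz0]; exact hae)).filter_mono nhdsWithin_le_nhds
  have hall : ∀ᶠ t in 𝓝[>] (0:ℝ), (x t, y t, z t) ∈ prismD := by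
    filter_upwards [hA, hB.filter_mono nhdsWithin_le_nhds, hC.filter_mono nhdsWithin_le_nhds,
      hD.filter_mono nhdsWithin_le_nhds, hE] with t h1 h2 h3 h4 h5
    exact ⟨⟨by simpa using (by linarith : -(π/2) < x t + y t), h2, h3⟩, h5, h4⟩
  obtain ⟨ε, hε, hsub⟩ := mem_nhdsGT_iff_exists_Ioo_subset.mp hall
  exact ⟨ε, hε, fun t ht => hsub ht⟩
end

section
/- Let X = (x, y, z) : ℝ → ℝ³ be a solution of the 1-1-1 ABC flow system with X(0) = (-π/2, 0, a) for some a ∈ [0, π/2), and let T > 0 be such that X(t) ∈ D̄ for all t ∈ [0, T]. Then for every t ∈ (0, T] one has z(t) > 0, x(t) + y(t) > -π/2, and y(t) - x(t) < 3π/2; consequently, if X(T) ∈ ∂D then x(T) = 0 or z(T) = π/2. -/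
open Real Set Filter Topology

private theorem keyPhi (s c S C : ℝ) (h1 : s^2+c^2=1) (h2 : S^2+C^2=1) (hS : 0 ≤ S) (hC : 0 ≤ C)
    (hs : 0 ≤ s) (hcon : 0 ≤ s*S + c*C) :
    0 < C*(4*s+2*c) + S - C := by
  rcases le_or_gt 0 c with hc | hc
  · have hs1 : 1 - c ≤ s := by nlinarith
    have hSC : 1 ≤ S + C := by nlinarith [mul_nonneg hS hC]
    nlinarith
  · rcases eq_or_lt_of_le hC with hC0 | hC0
    · have hS1 : S = 1 := by nlinarith
      nlinarith
    · have hs0 : 0 < s := by nlinarith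
      have key : 0 < 4*s^2 + 2*s*c - c - s := by
        nlinarith [sq_nonneg (s+c), sq_nonneg (s-c), sq_nonneg (2*s-1)]
      have h3 : 0 < s*(C*(4*s+2*c) + S - C) := by nlinarith [mul_pos hC0 key]
      nlinarith

private theorem sin_add_cos_ge_one {w : ℝ} (h0 : 0 ≤ w) (h1 : w ≤ π/2) :
    1 ≤ Real.sin w + Real.cos w := by
  have hpi := Real.pi_pos
  have hs := Real.sin_nonneg_of_nonneg_of_le_pi h0 (by linarith)
  have hc := Real.cos_nonneg_of_mem_Icc ⟨by linarith, h1⟩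
  nlinarith [Real.sin_sq_add_cos_sq w, Real.sin_le_one w, Real.cos_le_one w,
    mul_nonneg hs (sub_nonneg.2 (Real.sin_le_one w)),
    mul_nonneg hc (sub_nonneg.2 (Real.cos_le_one w))]

private theorem deriv_le_zero_left {f : ℝ → ℝ} {d t₀ c : ℝ} (hc : c < t₀)
    (hf : HasDerivAt f d t₀) (hge : ∀ s, c < s → s < t₀ → f t₀ ≤ f s) : d ≤ 0 := by
  have h1 : Tendsto (slope f t₀) (𝓝[<] t₀) (𝓝 d) :=
    (hasDerivAt_iff_tendsto_slope.mp hf).mono_left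
      (nhdsWithin_mono _ fun y hy => ne_of_lt hy)
  refine le_of_tendsto h1 ?_
  filter_upwards [Ioo_mem_nhdsLT_of_mem (⟨hc, le_refl t₀⟩ : t₀ ∈ Set.Ioc c t₀)] with s hs
  rw [slope_def_field]
  apply div_nonpos_iff.mpr
  left
  exact ⟨sub_nonneg.2 (hge s hs.1 hs.2), by linarith [hs.2]⟩

private theorem deriv_le_zero_right {f : ℝ → ℝ} {d t₁ e : ℝ} (he : t₁ < e)
    (hf : HasDerivAt f d t₁) (hle : ∀ s, t₁ < s → s < e → f s ≤ f t₁) : d ≤ 0 := by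
  have h1 : Tendsto (slope f t₁) (𝓝[>] t₁) (𝓝 d) :=
    (hasDerivAt_iff_tendsto_slope.mp hf).mono_left
      (nhdsWithin_mono _ fun y hy => ne_of_gt hy)
  refine le_of_tendsto h1 ?_
  filter_upwards [Ioo_mem_nhdsGT_of_mem (⟨le_refl t₁, he⟩ : t₁ ∈ Set.Ico t₁ e)] with s hs
  rw [slope_def_field]
  apply div_nonpos_iff.mpr
  right
  exact ⟨sub_nonpos.2 (hle s hs.1 hs.2), by linarith [hs.1]⟩

theorem stmt10 (x y z : ℝ → ℝ) (h : IsABCSol x y z) (a : ℝ) (ha : a ∈ Set.Ico 0 (π / 2))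
    (hx0 : x 0 = -(π / 2)) (hy0 : y 0 = 0) (hz0 : z 0 = a)
    (T : ℝ) (hT : 0 < T) (hD : ∀ t ∈ Set.Icc 0 T, (x t, y t, z t) ∈ closure prismD) :
    (∀ t ∈ Set.Ioc 0 T,
        0 < z t ∧ x t + y t > -(π / 2) ∧ y t - x t < 3 * π / 2) ∧
      ((x T, y T, z T) ∈ frontier prismD → x T = 0 ∨ z T = π / 2) := by
  obtain ⟨ha0, ha2⟩ := ha
  have hpi := Real.pi_pos
  have hxd : Differentiable ℝ x := fun t => ((h t).1).differentiableAt
  have hyd : Differentiable ℝ y := fun t => ((h t).2.1).differentiableAt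
  have hzd : Differentiable ℝ z := fun t => ((h t).2.2).differentiableAt
  have hxc : Continuous x := hxd.continuous
  have hyc : Continuous y := hyd.continuous
  have hzc : Continuous z := hzd.continuous
  -- weak bounds on [0, T]
  have hcl : closure prismD ⊆ {p : ℝ × ℝ × ℝ |
      -(π/2) ≤ p.1 + p.2.1 ∧ p.2.1 - p.1 ≤ 3*π/2 ∧ p.1 ≤ 0 ∧ 0 ≤ p.2.2 ∧ p.2.2 ≤ π/2} := by
    apply closure_minimal
    · rintro ⟨px, py, pz⟩ ⟨⟨h1, h2, h3⟩, h4, h5⟩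
      exact ⟨le_of_lt h1, le_of_lt h2, le_of_lt h3, le_of_lt h4, le_of_lt h5⟩
    · simp only [Set.setOf_and]
      exact (isClosed_le continuous_const (continuous_fst.add (continuous_snd.fst))).inter
        ((isClosed_le ((continuous_snd.fst).sub continuous_fst) continuous_const).inter
          ((isClosed_le continuous_fst continuous_const).inter
            ((isClosed_le continuous_const (continuous_snd.snd)).inter
              (isClosed_le (continuous_snd.snd) continuous_const))))
  have hw : ∀ t ∈ Set.Icc 0 T,
      -(π/2) ≤ x t + y t ∧ y t - x t ≤ 3*π/2 ∧ x t ≤ 0 ∧ 0 ≤ z t ∧ z t ≤ π/2 :=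
    fun t ht => hcl (hD t ht)
  -- Part A : strict x + y > -π/2 on (0, T]
  have hA : ∀ t ∈ Set.Ioc 0 T, -(π/2) < x t + y t := by
    rintro t₀ ⟨ht0, ht1⟩
    by_contra hcon
    push_neg at hcon
    have heq : x t₀ + y t₀ = -(π/2) := le_antisymm hcon (hw t₀ ⟨le_of_lt ht0, ht1⟩).1
    have hdle : (sin (z t₀) + cos (y t₀)) + (sin (x t₀) + cos (z t₀)) ≤ 0 := by
      apply deriv_le_zero_left ht0 (((h t₀).1).add ((h t₀).2.1))
      intro s hs0 hst
      have hws := (hw s ⟨le_of_lt hs0, le_trans (le_of_lt hst) ht1⟩).1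
      show x t₀ + y t₀ ≤ x s + y s
      linarith
    have hy' : y t₀ = -(π/2) - x t₀ := by linarith
    rw [hy'] at hdle
    have hcy : Real.cos (-(π/2) - x t₀) = -Real.sin (x t₀) := by
      rw [show -(π/2) - x t₀ = -(π/2 + x t₀) by ring, Real.cos_neg, Real.cos_add]
      simp
    rw [hcy] at hdle
    have hzw := hw t₀ ⟨le_of_lt ht0, ht1⟩
    have h1 := sin_add_cos_ge_one hzw.2.2.2.1 hzw.2.2.2.2
    linarith
  -- Part B : 2 z - (y - x) + π/2 ≥ 0 on [0, T]
  have hB : ∀ t ∈ Set.Icc 0 T, 0 ≤ 2 * z t - (y t - x t) + π/2 := by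
    by_contra hcon
    push_neg at hcon
    obtain ⟨t₀, ht₀, hneg⟩ := hcon
    set φ : ℝ → ℝ := fun s => 2 * z s - (y s - x s) + π/2 with hφdef
    have hneg' : φ t₀ < 0 := hneg
    have hφc : Continuous φ :=
      ((continuous_const.mul hzc).sub (hyc.sub hxc)).add continuous_const
    have h0φ : 0 ≤ φ 0 := by simp only [hφdef, hx0, hy0, hz0]; linarith
    have ht₀0 : 0 < t₀ := by
      rcases eq_or_lt_of_le ht₀.1 with h0 | h0
      · exfalso; rw [← h0] at hneg'; linarith
      · exact h0
    set Sset : Set ℝ := Set.Icc 0 t₀ ∩ {t | 0 ≤ φ t} with hSdef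
    have hSne : Sset.Nonempty := ⟨0, ⟨le_refl 0, le_of_lt ht₀0⟩, h0φ⟩
    have hSbdd : BddAbove Sset := ⟨t₀, fun s hs => hs.1.2⟩
    have hSclosed : IsClosed Sset := isClosed_Icc.inter (isClosed_le continuous_const hφc)
    have ht₁mem : sSup Sset ∈ Sset := hSclosed.csSup_mem hSne hSbdd
    set t₁ := sSup Sset with ht₁def
    have ht₁I : t₁ ∈ Set.Icc 0 t₀ := ht₁mem.1
    have hφt₁ : 0 ≤ φ t₁ := ht₁mem.2
    have ht₁lt : t₁ < t₀ := by
      rcases eq_or_lt_of_le ht₁I.2 with he | he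
      · exfalso; rw [he] at hφt₁; linarith
      · exact he
    have hafter : ∀ s, t₁ < s → s ≤ t₀ → φ s < 0 := by
      intro s hs1 hs2
      by_contra hns
      push_neg at hns
      have hmem : s ∈ Sset := ⟨⟨le_trans ht₁I.1 (le_of_lt hs1), hs2⟩, hns⟩
      exact absurd (le_csSup hSbdd hmem) (not_le.2 hs1)
    have hφt₁0 : φ t₁ = 0 := by
      refine le_antisymm ?_ hφt₁
      have htend : Tendsto φ (𝓝[>] t₁) (𝓝 (φ t₁)) :=
        (hφc.continuousAt.tendsto).mono_left nhdsWithin_le_nhds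
      refine le_of_tendsto htend ?_
      filter_upwards [Ioc_mem_nhdsGT_of_mem (⟨le_refl t₁, ht₁lt⟩ : t₁ ∈ Set.Ico t₁ t₀)] with s hs
      exact le_of_lt (hafter s hs.1 hs.2)
    have hd : HasDerivAt φ
        (2 * (Real.sin (y t₁) + Real.cos (x t₁)) -
          ((Real.sin (x t₁) + Real.cos (z t₁)) - (Real.sin (z t₁) + Real.cos (y t₁)))) t₁ :=
      ((HasDerivAt.const_mul (2:ℝ) ((h t₁).2.2)).sub (((h t₁).2.1).sub ((h t₁).1))).add_const (π/2)
    have hdle : 2 * (Real.sin (y t₁) + Real.cos (x t₁)) -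
        ((Real.sin (x t₁) + Real.cos (z t₁)) - (Real.sin (z t₁) + Real.cos (y t₁))) ≤ 0 := by
      apply deriv_le_zero_right ht₁lt hd
      intro s hs1 hs2
      rw [hφt₁0]
      exact le_of_lt (hafter s hs1 (le_of_lt hs2))
    have ht₁T : t₁ ∈ Set.Icc 0 T := ⟨ht₁I.1, le_trans ht₁I.2 ht₀.2⟩
    have wb := hw t₁ ht₁T
    have hy1 : y t₁ = x t₁ + π/2 + 2 * z t₁ := by
      have : φ t₁ = 2 * z t₁ - (y t₁ - x t₁) + π/2 := rfl
      rw [this] at hφt₁0; linarith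
    set u : ℝ := x t₁ + z t₁ + π/2 with hudef
    have hxu : x t₁ = u - (z t₁ + π/2) := by rw [hudef]; ring
    have hyu : y t₁ = u + z t₁ := by rw [hy1, hudef]; ring
    have hu0 : 0 ≤ u := by
      have := wb.1
      rw [hy1] at this
      rw [hudef]; linarith
    have huπ : u ≤ π := by rw [hudef]; linarith [wb.2.2.1, wb.2.2.2.2]
    have hsu : 0 ≤ Real.sin u := Real.sin_nonneg_of_nonneg_of_le_pi hu0 huπ
    have hSz : 0 ≤ Real.sin (z t₁) :=
      Real.sin_nonneg_of_nonneg_of_le_pi wb.2.2.2.1 (by linarith [wb.2.2.2.2])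
    have hCz : 0 ≤ Real.cos (z t₁) :=
      Real.cos_nonneg_of_mem_Icc ⟨by linarith [wb.2.2.2.1], wb.2.2.2.2⟩
    have hcon2 : 0 ≤ Real.sin u * Real.sin (z t₁) + Real.cos u * Real.cos (z t₁) := by
      have hmem : u - z t₁ ∈ Set.Icc (-(π/2)) (π/2) := by
        constructor
        · rw [hudef]
          have := wb.1; rw [hy1] at this
          linarith [wb.2.2.2.2]
        · rw [hudef]; linarith [wb.2.2.1]
      have := Real.cos_nonneg_of_mem_Icc hmem
      rw [Real.cos_sub] at this
      linarith
    have hkey := keyPhi (Real.sin u) (Real.cos u) (Real.sin (z t₁)) (Real.cos (z t₁))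
      (Real.sin_sq_add_cos_sq u) (Real.sin_sq_add_cos_sq (z t₁)) hSz hCz hsu hcon2
    have hdeq : 2 * (Real.sin (y t₁) + Real.cos (x t₁)) -
        ((Real.sin (x t₁) + Real.cos (z t₁)) - (Real.sin (z t₁) + Real.cos (y t₁))) =
        Real.cos (z t₁) * (4 * Real.sin u + 2 * Real.cos u) + Real.sin (z t₁) - Real.cos (z t₁) := by
      rw [hyu, hxu]
      simp [Real.sin_add, Real.cos_add, Real.sin_sub, Real.cos_sub,
        Real.sin_pi_div_two, Real.cos_pi_div_two]
      ring
    rw [hdeq] at hdle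
    linarith
  -- Part C : strict y - x < 3π/2 on (0, T]
  have hC' : ∀ t ∈ Set.Ioc 0 T, y t - x t < 3*π/2 := by
    rintro t₀ ⟨ht0, ht1⟩
    by_contra hcon
    push_neg at hcon
    have htI : t₀ ∈ Set.Icc 0 T := ⟨le_of_lt ht0, ht1⟩
    have wb := hw t₀ htI
    have heq : y t₀ - x t₀ = 3*π/2 := le_antisymm wb.2.1 hcon
    have hzT : z t₀ = π/2 := by
      have hb := hB t₀ htI
      have := wb.2.2.2.2
      linarith
    have hdle : (Real.sin (z t₀) + Real.cos (y t₀)) - (Real.sin (x t₀) + Real.cos (z t₀)) ≤ 0 := by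
      apply deriv_le_zero_left ht0 (((h t₀).1).sub ((h t₀).2.1))
      intro s hs0 hst
      have hws := (hw s ⟨le_of_lt hs0, le_trans (le_of_lt hst) ht1⟩).2.1
      show x t₀ - y t₀ ≤ x s - y s
      linarith
    have hy' : y t₀ = x t₀ + 3*π/2 := by linarith
    have hcy : Real.cos (x t₀ + 3*π/2) = Real.sin (x t₀) := by
      rw [show x t₀ + 3*π/2 = x t₀ - π/2 + 2*π by ring, Real.cos_add_two_pi,
        show x t₀ - π/2 = -(π/2 - x t₀) by ring, Real.cos_neg, Real.cos_pi_div_two_sub]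
    rw [hy', hzT, hcy, Real.sin_pi_div_two, Real.cos_pi_div_two] at hdle
    linarith
  -- Part D : z > 0 on (0, T]
  have hD' : ∀ t ∈ Set.Ioc 0 T, 0 < z t := by
    rintro t₀ ⟨ht0, ht1⟩
    by_contra hcon
    push_neg at hcon
    have htI : t₀ ∈ Set.Icc 0 T := ⟨le_of_lt ht0, ht1⟩
    have wb := hw t₀ htI
    have heq : z t₀ = 0 := le_antisymm hcon wb.2.2.2.1
    have hdle : Real.sin (y t₀) + Real.cos (x t₀) ≤ 0 := by
      apply deriv_le_zero_left ht0 ((h t₀).2.2)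
      intro s hs0 hst
      have hws := (hw s ⟨le_of_lt hs0, le_trans (le_of_lt hst) ht1⟩).2.2.2.1
      rw [heq]
      exact hws
    set p : ℝ := (x t₀ + y t₀ + π/2)/2 with hpdef
    set q : ℝ := (y t₀ - x t₀ - π/2)/2 with hqdef
    have hyp : y t₀ = p + q := by rw [hpdef, hqdef]; ring
    have hxp : x t₀ = p - q - π/2 := by rw [hpdef, hqdef]; ring
    have hp0 : 0 < p := by
      have := hA t₀ ⟨ht0, ht1⟩
      rw [hpdef]; linarith
    have hpπ : p < π := by
      have h1 := hC' t₀ ⟨ht0, ht1⟩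
      rw [hpdef]; linarith [wb.2.2.1]
    have hq2 : q < π/2 := by
      have h1 := hC' t₀ ⟨ht0, ht1⟩
      rw [hqdef]; linarith
    have hq1 : -(π/2) < q := by
      rw [hqdef]; linarith [wb.1, wb.2.2.1]
    have hiden : Real.sin (y t₀) + Real.cos (x t₀) = 2 * Real.sin p * Real.cos q := by
      rw [hyp, hxp]
      simp [Real.sin_add, Real.cos_add, Real.sin_sub, Real.cos_sub,
        Real.sin_pi_div_two, Real.cos_pi_div_two]
      ring
    have hpos : 0 < 2 * Real.sin p * Real.cos q :=
      mul_pos (mul_pos two_pos (Real.sin_pos_of_pos_of_lt_pi hp0 hpπ))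
        (Real.cos_pos_of_mem_Ioo ⟨hq1, hq2⟩)
    rw [hiden] at hdle
    linarith
  refine ⟨fun t ht => ⟨hD' t ht, hA t ht, hC' t ht⟩, ?_⟩
  intro hfr
  have hopen : IsOpen prismD := by
    have hset : prismD = {p : ℝ × ℝ × ℝ | -(π/2) < p.1 + p.2.1} ∩
        ({p : ℝ × ℝ × ℝ | p.2.1 - p.1 < 3*π/2} ∩
          ({p : ℝ × ℝ × ℝ | p.1 < 0} ∩
            ({p : ℝ × ℝ × ℝ | 0 < p.2.2} ∩ {p : ℝ × ℝ × ℝ | p.2.2 < π/2}))) := by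
      ext ⟨px, py, pz⟩
      simp [prismD, triR]
      tauto
    rw [hset]
    exact (isOpen_lt continuous_const (continuous_fst.add (continuous_snd.fst))).inter
      ((isOpen_lt ((continuous_snd.fst).sub continuous_fst) continuous_const).inter
        ((isOpen_lt continuous_fst continuous_const).inter
          ((isOpen_lt continuous_const (continuous_snd.snd)).inter
            (isOpen_lt (continuous_snd.snd) continuous_const))))
  have hnm : (x T, y T, z T) ∉ prismD := by
    have h2 := hfr.2
    rwa [hopen.interior_eq] at h2
  by_contra hcontra
  push_neg at hcontra
  obtain ⟨hxT, hzT⟩ := hcontra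
  have hTmem : T ∈ Set.Icc 0 T := ⟨le_of_lt hT, le_refl T⟩
  have wb := hw T hTmem
  have hTIoc : T ∈ Set.Ioc 0 T := ⟨hT, le_refl T⟩
  exact hnm ⟨⟨hA T hTIoc, hC' T hTIoc, lt_of_le_of_ne wb.2.2.1 hxT⟩,
    hD' T hTIoc, lt_of_le_of_ne wb.2.2.2.2 hzT⟩
end

section
/- Let X = (x, y, z) : ℝ → ℝ³ be a solution of the 1-1-1 ABC flow system with X(0) = (-π/2, 0, a) for some a ∈ [0, π/2). Then there exists a time t_a > 0 such that X(t) ∈ D for all t ∈ (0, t_a) and X(t_a) ∈ ∂D; i.e., the orbit exits D in finite positive time. -/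
open Real Set Filter

open Topology



-- (A)
lemma auxA {u : ℝ} (h1 : -(π/2) ≤ u) (h2 : u ≤ 0) : Real.sin u + 1 ≤ Real.cos u := by
  have hs : Real.sin u ≤ 0 := Real.sin_nonpos_of_nonpos_of_neg_pi_le h2 (by nlinarith [Real.pi_pos])
  have hc : 0 ≤ Real.cos u := Real.cos_nonneg_of_mem_Icc ⟨h1, h2.trans (by positivity)⟩
  have hp := Real.sin_sq_add_cos_sq u
  nlinarith [mul_nonpos_of_nonpos_of_nonneg hs hc, sq_nonneg (Real.cos u - Real.sin u)]

-- (B)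
lemma auxB {u : ℝ} (h1 : 0 ≤ u) (h2 : u ≤ π/2) : 1 ≤ Real.sin u + Real.cos u := by
  have hs : 0 ≤ Real.sin u := Real.sin_nonneg_of_nonneg_of_le_pi h1 (by nlinarith [Real.pi_pos])
  have hc : 0 ≤ Real.cos u := Real.cos_nonneg_of_mem_Icc ⟨by linarith [Real.pi_pos], h2⟩
  have hp := Real.sin_sq_add_cos_sq u
  nlinarith [mul_nonneg hs hc, sq_nonneg (Real.cos u + Real.sin u)]

-- (C)
lemma auxC {u v : ℝ} (hu1 : -(π/2) ≤ u) (hu2 : u ≤ 0) (hv1 : -(π/2) ≤ v) (hv2 : v ≤ π/2)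
    (huv : -(π/2) ≤ u + v) : 0 ≤ Real.sin u + Real.cos u + Real.sin v + Real.cos v := by
  have hss : Real.sin u + Real.sin v = 2 * Real.sin ((u+v)/2) * Real.cos ((u-v)/2) := by
    have := Real.sin_sub_sin u (-v)
    simpa [sub_neg_eq_add, ← sub_eq_add_neg] using this
  have hcc := Real.cos_add_cos u v
  have h1 : 0 ≤ Real.cos ((u-v)/2) := by
    apply Real.cos_nonneg_of_mem_Icc
    exact ⟨by linarith, by linarith⟩
  have h2 : 0 ≤ Real.sin ((u+v)/2) + Real.cos ((u+v)/2) := by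
    set s := (u+v)/2 with hsdef
    have hc : 0 ≤ Real.cos s := Real.cos_nonneg_of_mem_Icc ⟨by simp only [hsdef]; linarith, by simp only [hsdef]; linarith⟩
    have h2s : 0 ≤ Real.cos (2*s) := Real.cos_nonneg_of_mem_Icc ⟨by simp only [hsdef]; linarith, by simp only [hsdef]; linarith⟩
    have hd : Real.cos (2*s) = Real.cos s ^ 2 - Real.sin s ^ 2 := Real.cos_two_mul' s
    nlinarith [sq_nonneg (Real.sin s + Real.cos s)]
  nlinarith [mul_nonneg h2 h1]

-- pushing left from positive derivative
lemma left_push {f : ℝ → ℝ} {c L : ℝ} (hc : 0 < c) (hf : HasDerivAt f L c) (hL : 0 < L) :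
    ∃ s ∈ Set.Ioo 0 c, f s < f c := by
  rw [hasDerivAt_iff_tendsto_slope] at hf
  have h1 : ∀ᶠ s in 𝓝[<] c, 0 < slope f c s :=
    (hf.eventually (eventually_gt_nhds hL)).filter_mono
      (nhdsWithin_mono c (fun s hs => ne_of_lt hs))
  have h3 : ∀ᶠ s in 𝓝[<] c, s ∈ Set.Ioo 0 c :=
    eventually_of_mem (Ioo_mem_nhdsLT_of_mem ⟨hc, le_refl c⟩) (fun s hs => hs)
  obtain ⟨s, hs1, hs2⟩ := (h1.and h3).exists
  refine ⟨s, hs2, ?_⟩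
  rw [slope_def_field] at hs1
  rcases div_pos_iff.1 hs1 with ⟨h, h'⟩ | ⟨h, h'⟩
  · linarith [hs2.2, sub_pos.1 h']
  · linarith [sub_neg.1 h]

-- positive just to the right of 0
lemma slope_pos_right {f : ℝ → ℝ} {L : ℝ} (hf : HasDerivAt f L 0) (h0 : f 0 = 0) (hL : 0 < L) :
    ∃ δ > 0, ∀ t ∈ Set.Ioc 0 δ, 0 < f t := by
  rw [hasDerivAt_iff_tendsto_slope] at hf
  have h1 : ∀ᶠ s in 𝓝[>] (0:ℝ), 0 < slope f 0 s :=
    (hf.eventually (eventually_gt_nhds hL)).filter_mono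
      (nhdsWithin_mono _ (fun s hs => ne_of_gt hs))
  obtain ⟨u, hu, hsub⟩ := mem_nhdsGT_iff_exists_Ioc_subset.1 h1
  refine ⟨u, hu, fun t ht => ?_⟩
  have h2 := hsub ht
  rw [mem_setOf_eq, slope_def_field, h0, sub_zero, sub_zero] at h2
  rcases div_pos_iff.1 h2 with ⟨h, _⟩ | ⟨_, h'⟩
  · exact h
  · linarith [ht.1]

-- eventually small for continuous functions
lemma cont_right {f : ℝ → ℝ} {b : ℝ} (hf : Continuous f) (h : f 0 < b) :
    ∃ δ > 0, ∀ t ∈ Set.Ioc 0 δ, f t < b := by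
  have hev : ∀ᶠ t in 𝓝[>] (0:ℝ), f t < b :=
    ((hf.tendsto 0).eventually (eventually_lt_nhds h)).filter_mono nhdsWithin_le_nhds
  obtain ⟨u, hu, hsub⟩ := mem_nhdsGT_iff_exists_Ioc_subset.1 hev
  exact ⟨u, hu, fun t ht => hsub ht⟩

lemma isOpen_prismD' : IsOpen {p : ℝ × ℝ × ℝ | -(Real.pi / 2) < p.1 + p.2.1 ∧ p.2.1 - p.1 < 3 * Real.pi / 2 ∧ p.1 < 0 ∧ 0 < p.2.2 ∧ p.2.2 < Real.pi / 2} := by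
  have c1 : Continuous fun p : ℝ×ℝ×ℝ => p.1 := continuous_fst
  have c2 : Continuous fun p : ℝ×ℝ×ℝ => p.2.1 := continuous_fst.comp continuous_snd
  have c3 : Continuous fun p : ℝ×ℝ×ℝ => p.2.2 := continuous_snd.comp continuous_snd
  have : {p : ℝ × ℝ × ℝ | -(Real.pi / 2) < p.1 + p.2.1 ∧ p.2.1 - p.1 < 3 * Real.pi / 2 ∧ p.1 < 0 ∧ 0 < p.2.2 ∧ p.2.2 < Real.pi / 2}
      = {p : ℝ×ℝ×ℝ | -(Real.pi/2) < p.1 + p.2.1} ∩ ({p | p.2.1 - p.1 < 3*Real.pi/2} ∩ ({p | p.1 < 0} ∩ ({p | 0 < p.2.2} ∩ {p | p.2.2 < Real.pi/2}))) := by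
    ext p; simp only [mem_setOf_eq, mem_inter_iff]
  rw [this]
  exact (isOpen_lt continuous_const (c1.add c2)).inter
    ((isOpen_lt (c2.sub c1) continuous_const).inter
      ((isOpen_lt c1 continuous_const).inter
        ((isOpen_lt continuous_const c3).inter (isOpen_lt c3 continuous_const))))

lemma isOpen_prismD : IsOpen prismD := by
  have heq : prismD = {p : ℝ × ℝ × ℝ | -(Real.pi / 2) < p.1 + p.2.1 ∧
      p.2.1 - p.1 < 3 * Real.pi / 2 ∧ p.1 < 0 ∧ 0 < p.2.2 ∧ p.2.2 < Real.pi / 2} := by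
    ext p
    simp only [prismD, triR, mem_setOf_eq]
    tauto
  rw [heq]
  exact isOpen_prismD'

lemma prismD_mem (p q r : ℝ) : (p, q, r) ∈ prismD ↔
    (-(π/2) < p + q ∧ q - p < 3*π/2 ∧ p < 0 ∧ 0 < r ∧ r < π/2) := by
  simp only [prismD, triR, mem_setOf_eq]
  tauto


lemma entering (x y z : ℝ → ℝ) (h : IsABCSol x y z) (a : ℝ) (ha0 : 0 ≤ a) (ha2 : a < π/2)
    (hx0 : x 0 = -(π/2)) (hy0 : y 0 = 0) (hz0 : z 0 = a) :
    ∃ δ > 0, ∀ t ∈ Set.Ioc 0 δ,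
      ((x t, y t, z t) ∈ prismD ∧ -(π/2) < x t ∧ y t < z t) := by
  have hπ := Real.pi_pos
  have hx' : ∀ t, HasDerivAt x (Real.sin (z t) + Real.cos (y t)) t := fun t => (h t).1
  have hy' : ∀ t, HasDerivAt y (Real.sin (x t) + Real.cos (z t)) t := fun t => (h t).2.1
  have hz' : ∀ t, HasDerivAt z (Real.sin (y t) + Real.cos (x t)) t := fun t => (h t).2.2
  have hxc : Continuous x := continuous_iff_continuousAt.2 fun t => (hx' t).continuousAt
  have hyc : Continuous y := continuous_iff_continuousAt.2 fun t => (hy' t).continuousAt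
  have hzc : Continuous z := continuous_iff_continuousAt.2 fun t => (hz' t).continuousAt
  have hsa : 0 ≤ Real.sin a := Real.sin_nonneg_of_nonneg_of_le_pi ha0 (by linarith)
  have hca : 0 < Real.cos a := Real.cos_pos_of_mem_Ioo ⟨by linarith, ha2⟩
  -- δ₁ : x t > -(π/2)
  have hD1 : HasDerivAt (fun t => x t + π/2) (Real.sin a + 1) 0 := by
    have := (hx' 0).add_const (π/2)
    rw [hz0, hy0, Real.cos_zero] at this
    exact this
  obtain ⟨δ₁, hδ₁, hP1⟩ := slope_pos_right hD1 (by simp [hx0]) (by linarith)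
  -- δ₂ : x t + y t > -(π/2)
  have hD2 : HasDerivAt (fun t => x t + y t + π/2) (Real.sin a + Real.cos a) 0 := by
    have := ((hx' 0).add (hy' 0)).add_const (π/2)
    rw [hz0, hy0, hx0, Real.cos_zero, Real.sin_neg, Real.sin_pi_div_two] at this
    rw [show Real.sin a + Real.cos a = Real.sin a + 1 + (-1 + Real.cos a) by ring]
    exact this
  obtain ⟨δ₂, hδ₂, hP2⟩ := slope_pos_right hD2 (by simp [hx0, hy0]) (by linarith)
  -- δ₃ : 0 < z t  (via w = sin y + cos x > 0 near 0, z strictly increasing)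
  have hw' : ∀ t, HasDerivAt (fun t => Real.sin (y t) + Real.cos (x t))
      (Real.cos (y t) * (Real.sin (x t) + Real.cos (z t)) +
        -Real.sin (x t) * (Real.sin (z t) + Real.cos (y t))) t :=
    fun t => ((hy' t).sin.add (hx' t).cos)
  have hw0 : HasDerivAt (fun t => Real.sin (y t) + Real.cos (x t)) (Real.sin a + Real.cos a) 0 := by
    have := hw' 0
    rw [hx0, hy0, hz0] at this
    simp only [Real.sin_zero, Real.cos_zero, Real.sin_neg, Real.sin_pi_div_two, Real.cos_neg,
      Real.cos_pi_div_two] at this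
    convert this using 1
    ring
  obtain ⟨δ₃, hδ₃, hP3w⟩ := slope_pos_right hw0
    (by simp [hx0, hy0, Real.cos_neg, Real.cos_pi_div_two]) (by linarith)
  have hP3 : ∀ t ∈ Set.Ioc 0 δ₃, 0 < z t := by
    have hmono : StrictMonoOn z (Set.Icc 0 δ₃) := by
      apply strictMonoOn_of_deriv_pos (convex_Icc 0 δ₃) hzc.continuousOn
      intro t ht
      rw [interior_Icc] at ht
      rw [(hz' t).deriv]
      exact hP3w t ⟨ht.1, ht.2.le⟩
    intro t ht
    have := hmono ⟨le_refl 0, hδ₃.le⟩ ⟨ht.1.le, ht.2⟩ ht.1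
    rw [hz0] at this
    linarith
  -- δ₄ : z t < π/2
  obtain ⟨δ₄, hδ₄, hP4⟩ := cont_right (b := π/2) hzc (by rw [hz0]; exact ha2)
  -- δ₅ : x t < 0
  obtain ⟨δ₅, hδ₅, hP5⟩ := cont_right (b := 0) hxc (by rw [hx0]; linarith)
  -- δ₆ : y t - x t < 3π/2
  obtain ⟨δ₆, hδ₆, hP6⟩ := cont_right (b := 3*π/2) (hyc.sub hxc) (by rw [Pi.sub_apply, hy0, hx0]; linarith)
  -- δ₇ : y t < z t (via W = (sin y + cos x) - (sin x + cos z) > 0 near 0, z - y strictly increasing)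
  have hW' : ∀ t, HasDerivAt (fun t => (Real.sin (y t) + Real.cos (x t)) - (Real.sin (x t) + Real.cos (z t)))
      ((Real.cos (y t) * (Real.sin (x t) + Real.cos (z t)) +
        -Real.sin (x t) * (Real.sin (z t) + Real.cos (y t))) -
       (Real.cos (x t) * (Real.sin (z t) + Real.cos (y t)) +
        -Real.sin (z t) * (Real.sin (y t) + Real.cos (x t)))) t :=
    fun t => ((hy' t).sin.add (hx' t).cos).sub ((hx' t).sin.add (hz' t).cos)
  have hWpos : ∃ δ > 0, ∀ t ∈ Set.Ioc 0 δ,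
      0 < (Real.sin (y t) + Real.cos (x t)) - (Real.sin (x t) + Real.cos (z t)) := by
    rcases eq_or_lt_of_le ha0 with haz | haz
    · -- a = 0 : use the slope lemma
      have hW0 : HasDerivAt (fun t => (Real.sin (y t) + Real.cos (x t)) - (Real.sin (x t) + Real.cos (z t))) 1 0 := by
        have := hW' 0
        rw [hx0, hy0, hz0, ← haz] at this
        simp only [Real.sin_zero, Real.cos_zero, Real.sin_neg, Real.sin_pi_div_two,
          Real.cos_neg, Real.cos_pi_div_two] at this
        convert this using 1
        ring
      exact slope_pos_right hW0
        (by simp [hx0, hy0, hz0, ← haz, Real.cos_neg, Real.cos_pi_div_two, Real.sin_neg,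
          Real.sin_pi_div_two]) one_pos
    · -- a > 0 : continuity
      have hc : Continuous fun t => (Real.sin (x t) + Real.cos (z t)) - (Real.sin (y t) + Real.cos (x t)) := by
        fun_prop
      obtain ⟨δ, hδ, hP⟩ := cont_right (b := 0) hc (by
        rw [hx0, hy0, hz0]
        simp [Real.sin_neg, Real.sin_pi_div_two, Real.cos_neg, Real.cos_pi_div_two]
        have h1 : Real.cos a < 1 := by
          have := Real.cos_lt_cos_of_nonneg_of_le_pi (le_refl 0) (by linarith : a ≤ π) haz
          rwa [Real.cos_zero] at this
        linarith)
      exact ⟨δ, hδ, fun t ht => by have := hP t ht; linarith⟩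
  obtain ⟨δ₇, hδ₇, hP7W⟩ := hWpos
  have hP7 : ∀ t ∈ Set.Ioc 0 δ₇, y t < z t := by
    have hmono : StrictMonoOn (fun t => z t - y t) (Set.Icc 0 δ₇) := by
      apply strictMonoOn_of_deriv_pos (convex_Icc 0 δ₇) (hzc.sub hyc).continuousOn
      intro t ht
      rw [interior_Icc] at ht
      rw [((hz' t).sub (hy' t)).deriv]
      exact hP7W t ⟨ht.1, ht.2.le⟩
    intro t ht
    have := hmono ⟨le_refl 0, hδ₇.le⟩ ⟨ht.1.le, ht.2⟩ ht.1
    simp only [hz0, hy0, sub_zero] at this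
    linarith
  -- combine
  refine ⟨min δ₁ (min δ₂ (min δ₃ (min δ₄ (min δ₅ (min δ₆ δ₇))))), by positivity, fun t ht => ?_⟩
  obtain ⟨ht0, htle⟩ := ht
  simp only [le_min_iff] at htle
  obtain ⟨h1, h2, h3, h4, h5, h6, h7⟩ := htle
  refine ⟨(prismD_mem _ _ _).2 ⟨?_, ?_, ?_, ?_, ?_⟩, ?_, ?_⟩
  · have := hP2 t ⟨ht0, h2⟩; linarith
  · exact hP6 t ⟨ht0, h6⟩
  · exact hP5 t ⟨ht0, h5⟩
  · exact hP3 t ⟨ht0, h3⟩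
  · exact hP4 t ⟨ht0, h4⟩
  · have := hP1 t ⟨ht0, h1⟩; linarith
  · exact hP7 t ⟨ht0, h7⟩

lemma invariance (x y z : ℝ → ℝ) (h : IsABCSol x y z) (B δ : ℝ) (hδ : 0 < δ) (hδB : δ < B)
    (hP : ∀ t ∈ Set.Ioc 0 B, -(π/2) < x t + y t ∧ y t - x t < 3*π/2 ∧ x t < 0 ∧ 0 < z t ∧ z t < π/2)
    (hseed : ∀ t ∈ Set.Ioc 0 δ, -(π/2) < x t ∧ y t < z t) :
    ∀ t ∈ Set.Ioc 0 B, -(π/2) < x t ∧ y t < z t := by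
  have hπ := Real.pi_pos
  have hx' : ∀ t, HasDerivAt x (Real.sin (z t) + Real.cos (y t)) t := fun t => (h t).1
  have hy' : ∀ t, HasDerivAt y (Real.sin (x t) + Real.cos (z t)) t := fun t => (h t).2.1
  have hz' : ∀ t, HasDerivAt z (Real.sin (y t) + Real.cos (x t)) t := fun t => (h t).2.2
  have hxc : Continuous x := continuous_iff_continuousAt.2 fun t => (hx' t).continuousAt
  have hyc : Continuous y := continuous_iff_continuousAt.2 fun t => (hy' t).continuousAt
  have hzc : Continuous z := continuous_iff_continuousAt.2 fun t => (hz' t).continuousAt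
  set A : Set ℝ := {t | t ∈ Set.Icc δ B ∧ ∀ s ∈ Set.Ioc 0 t, -(π/2) < x s ∧ y s < z s} with hA
  have hAδ : δ ∈ A := ⟨⟨le_refl δ, hδB.le⟩, hseed⟩
  have hAne : A.Nonempty := ⟨δ, hAδ⟩
  have hAbdd : BddAbove A := ⟨B, fun t ht => ht.1.2⟩
  set c := sSup A with hcdef
  have hδc : δ ≤ c := le_csSup hAbdd hAδ
  have hcB : c ≤ B := csSup_le hAne fun t ht => ht.1.2
  have hc0 : 0 < c := lt_of_lt_of_le hδ hδc
  have hQ : ∀ s ∈ Set.Ioo 0 c, -(π/2) < x s ∧ y s < z s := by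
    intro s hs
    rcases le_or_gt s δ with h1 | h1
    · exact hseed s ⟨hs.1, h1⟩
    · obtain ⟨t, htA, hst⟩ := exists_lt_of_lt_csSup hAne hs.2
      exact htA.2 s ⟨hs.1, hst.le⟩
  have hIoo : Set.Ioo 0 c ∈ 𝓝[<] c := Ioo_mem_nhdsLT_of_mem ⟨hc0, le_refl c⟩
  have hxcw : -(π/2) ≤ x c :=
    ge_of_tendsto (hxc.continuousWithinAt (s := Set.Iio c))
      (eventually_of_mem hIoo fun s hs => (hQ s hs).1.le)
  have hyzw : y c ≤ z c := by
    have : (0:ℝ) ≤ z c - y c :=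
      ge_of_tendsto ((hzc.sub hyc).continuousWithinAt (s := Set.Iio c))
        (eventually_of_mem hIoo fun s hs => by rw [Pi.sub_apply]; linarith [(hQ s hs).2])
    linarith
  obtain ⟨hPxy, hPyx, hPx, hPz1, hPz2⟩ := hP c ⟨hc0, hcB⟩
  have hycgt : -(π/2) < y c := by linarith
  -- strict x at c
  have hxcs : -(π/2) < x c := by
    rcases eq_or_lt_of_le hxcw with heq | hlt
    · exfalso
      have hpos : 0 < Real.sin (z c) + Real.cos (y c) := by
        have h1 : 0 < Real.sin (z c) := Real.sin_pos_of_pos_of_lt_pi hPz1 (by linarith)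
        have h2 : 0 ≤ Real.cos (y c) := Real.cos_nonneg_of_mem_Icc ⟨hycgt.le, by linarith⟩
        linarith
      obtain ⟨s, hs, hlt2⟩ := left_push hc0 (hx' c) hpos
      have := (hQ s hs).1
      rw [← heq] at hlt2
      linarith
    · exact hlt
  -- strict y < z at c
  have hyzs : y c < z c := by
    rcases eq_or_lt_of_le hyzw with heq | hlt
    · exfalso
      have hy0c : 0 < y c := by rw [heq]; exact hPz1
      have hpos : 0 < (Real.sin (y c) + Real.cos (x c)) - (Real.sin (x c) + Real.cos (z c)) := by
        have hA1 := auxA (u := x c) hxcw hPx.le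
        have h1 : Real.cos (z c) ≤ 1 := Real.cos_le_one _
        have h2 : 0 < Real.sin (y c) := Real.sin_pos_of_pos_of_lt_pi hy0c (by rw [heq]; linarith)
        linarith
      obtain ⟨s, hs, hlt2⟩ := left_push hc0 ((hz' c).sub (hy' c)) hpos
      have hlt3 : z s - y s < z c - y c := hlt2
      have := (hQ s hs).2
      linarith
    · exact hlt
  -- c = B
  have hcBeq : c = B := by
    by_contra hne
    have hltB : c < B := lt_of_le_of_ne hcB hne
    have hFc : 0 < min (x c + π/2) (z c - y c) := lt_min (by linarith) (by linarith)
    have hcont : Continuous (fun t => min (x t + π/2) (z t - y t)) :=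
      (hxc.add continuous_const).min (hzc.sub hyc)
    have hev : ∀ᶠ t in 𝓝 c, 0 < min (x t + π/2) (z t - y t) :=
      (hcont.tendsto c).eventually (eventually_gt_nhds hFc)
    obtain ⟨ε, hε, hball⟩ := Metric.eventually_nhds_iff.1 hev
    set t' := min (c + ε/2) B with ht'def
    have hct' : c < t' := lt_min (by linarith) hltB
    have ht'B : t' ≤ B := min_le_right _ _
    have ht'A : t' ∈ A := by
      refine ⟨⟨le_trans hδc hct'.le, ht'B⟩, fun s hs => ?_⟩
      rcases lt_trichotomy s c with h1 | h1 | h1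
      · exact hQ s ⟨hs.1, h1⟩
      · rw [h1]; exact ⟨hxcs, hyzs⟩
      · have hd : dist s c < ε := by
          rw [Real.dist_eq, abs_of_pos (sub_pos.2 h1)]
          have : s ≤ t' := hs.2
          have : t' ≤ c + ε/2 := min_le_left _ _
          linarith
        have hmin := hball hd
        have hm1 := lt_min_iff.1 hmin
        exact ⟨by linarith [hm1.1], by linarith [hm1.2]⟩
    have := le_csSup hAbdd ht'A
    linarith
  intro t ht
  rcases eq_or_lt_of_le ht.2 with h1 | h1
  · rw [h1, ← hcBeq]; exact ⟨hxcs, hyzs⟩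
  · exact hQ t ⟨ht.1, by rw [hcBeq]; exact h1⟩

theorem stmt11 (x y z : ℝ → ℝ) (h : IsABCSol x y z) (a : ℝ) (ha : a ∈ Set.Ico 0 (π / 2))
    (hx0 : x 0 = -(π / 2)) (hy0 : y 0 = 0) (hz0 : z 0 = a) :
    ∃ tₐ > (0 : ℝ), (∀ t ∈ Set.Ioo 0 tₐ, (x t, y t, z t) ∈ prismD) ∧
      (x tₐ, y tₐ, z tₐ) ∈ frontier prismD := by
  obtain ⟨ha0, ha2⟩ := ha
  have hπ := Real.pi_pos
  have hx' : ∀ t, HasDerivAt x (Real.sin (z t) + Real.cos (y t)) t := fun t => (h t).1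
  have hy' : ∀ t, HasDerivAt y (Real.sin (x t) + Real.cos (z t)) t := fun t => (h t).2.1
  have hz' : ∀ t, HasDerivAt z (Real.sin (y t) + Real.cos (x t)) t := fun t => (h t).2.2
  have hxc : Continuous x := continuous_iff_continuousAt.2 fun t => (hx' t).continuousAt
  have hyc : Continuous y := continuous_iff_continuousAt.2 fun t => (hy' t).continuousAt
  have hzc : Continuous z := continuous_iff_continuousAt.2 fun t => (hz' t).continuousAt
  obtain ⟨δ₀, hδ₀, hEnter⟩ := entering x y z h a ha0 ha2 hx0 hy0 hz0
  set δ := min δ₀ 1 with hδdef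
  have hδpos : 0 < δ := lt_min hδ₀ one_pos
  have hδ1 : δ ≤ 1 := min_le_right _ _
  have hδδ₀ : δ ≤ δ₀ := min_le_left _ _
  have hEnter' : ∀ t ∈ Set.Ioc 0 δ, ((x t, y t, z t) ∈ prismD ∧ -(π/2) < x t ∧ y t < z t) :=
    fun t ht => hEnter t ⟨ht.1, le_trans ht.2 hδδ₀⟩
  -- Step 2: the orbit cannot stay in prismD on all of (0, 5]
  have hExit : ¬ (∀ t ∈ Set.Ioc 0 (5:ℝ), (x t, y t, z t) ∈ prismD) := by
    intro hP
    have hP' : ∀ t ∈ Set.Ioc 0 (5:ℝ),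
        -(π/2) < x t + y t ∧ y t - x t < 3*π/2 ∧ x t < 0 ∧ 0 < z t ∧ z t < π/2 :=
      fun t ht => (prismD_mem _ _ _).1 (hP t ht)
    have hQ := invariance x y z h 5 δ hδpos (by linarith) hP'
      (fun t ht => (hEnter' t ht).2)
    -- p = x + y + z  increases at rate ≥ 1
    have hqmono : MonotoneOn (fun t => (x t + y t + z t) - t) (Set.Icc 0 (5:ℝ)) := by
      apply monotoneOn_of_deriv_nonneg (convex_Icc 0 5)
      · exact (((hxc.add hyc).add hzc).sub continuous_id).continuousOn
      · intro t ht
        exact ((((hx' t).add (hy' t)).add (hz' t)).sub (hasDerivAt_id t)).differentiableAt.differentiableWithinAt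
      · intro t ht
        rw [interior_Icc] at ht
        have hq : HasDerivAt (fun t => x t + y t + z t - t)
            ((Real.sin (z t) + Real.cos (y t)) + (Real.sin (x t) + Real.cos (z t)) +
              (Real.sin (y t) + Real.cos (x t)) - 1) t := by
          exact (((hx' t).add (hy' t)).add (hz' t)).sub (hasDerivAt_id t)
        rw [hq.deriv]
        have htm : t ∈ Set.Ioc 0 (5:ℝ) := ⟨ht.1, ht.2.le⟩
        obtain ⟨hxy, hyx, hxlt, hz1, hz2⟩ := hP' t htm
        obtain ⟨hxgt, hylt⟩ := hQ t htm
        have hy1 : -(π/2) < y t := by linarith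
        have hy2 : y t ≤ π/2 := by linarith
        have hB := auxB (u := z t) hz1.le hz2.le
        have hC := auxC (u := x t) (v := y t) hxgt.le hxlt.le hy1.le hy2 (by linarith)
        linarith
    have h05 : (0:ℝ) ∈ Set.Icc (0:ℝ) 5 := by norm_num
    have h55 : (5:ℝ) ∈ Set.Icc (0:ℝ) 5 := by norm_num
    have hineq := hqmono h05 h55 (by norm_num)
    simp only [hx0, hy0, hz0] at hineq
    obtain ⟨_, _, hxlt5, hz15, hz25⟩ := hP' 5 ⟨by norm_num, le_refl _⟩
    obtain ⟨_, hylt5⟩ := hQ 5 ⟨by norm_num, le_refl _⟩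
    have hpi := Real.pi_lt_d2
    linarith
  -- Step 3: define the exit time
  push_neg at hExit
  obtain ⟨t₀, ht₀m, ht₀⟩ := hExit
  set E : Set ℝ := {t | δ ≤ t ∧ (x t, y t, z t) ∉ prismD} with hEdef
  have ht₀E : t₀ ∈ E := by
    refine ⟨?_, ht₀⟩
    by_contra hlt
    push_neg at hlt
    exact ht₀ (hEnter' t₀ ⟨ht₀m.1, hlt.le⟩).1
  have hEne : E.Nonempty := ⟨t₀, ht₀E⟩
  have hEbdd : BddBelow E := ⟨δ, fun t ht => ht.1⟩
  set tₐ := sInf E with htadef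
  have hta1 : δ ≤ tₐ := le_csInf hEne fun t ht => ht.1
  have hta0 : 0 < tₐ := lt_of_lt_of_le hδpos hta1
  have hin : ∀ t ∈ Set.Ioo 0 tₐ, (x t, y t, z t) ∈ prismD := by
    intro t ht
    rcases le_or_gt t δ with h1 | h1
    · exact (hEnter' t ⟨ht.1, h1⟩).1
    · by_contra hnp
      have : tₐ ≤ t := csInf_le hEbdd ⟨h1.le, hnp⟩
      linarith [ht.2]
  have hcont3 : Continuous (fun t => (x t, y t, z t)) := hxc.prodMk (hyc.prodMk hzc)
  have hnP : (x tₐ, y tₐ, z tₐ) ∉ prismD := by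
    intro hPta
    have hev : ∀ᶠ t in 𝓝 tₐ, (x t, y t, z t) ∈ prismD :=
      (hcont3.tendsto tₐ).eventually (isOpen_prismD.eventually_mem hPta)
    obtain ⟨ε, hε, hball⟩ := Metric.eventually_nhds_iff.1 hev
    obtain ⟨s, hsE, hslt⟩ := exists_lt_of_csInf_lt hEne (show sInf E < tₐ + ε by
      rw [← htadef]; linarith)
    have hs1 : tₐ ≤ s := csInf_le hEbdd hsE
    have hd : dist s tₐ < ε := by
      rw [Real.dist_eq, abs_of_nonneg (by linarith)]
      linarith
    exact hsE.2 (hball hd)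
  have hclosure : (x tₐ, y tₐ, z tₐ) ∈ closure prismD := by
    have htend : Tendsto (fun t => (x t, y t, z t)) (𝓝[<] tₐ) (𝓝 (x tₐ, y tₐ, z tₐ)) :=
      hcont3.continuousWithinAt (s := Set.Iio tₐ)
    exact mem_closure_of_tendsto htend
      (eventually_of_mem (Ioo_mem_nhdsLT_of_mem ⟨hta0, le_refl _⟩) (fun s hs => hin s hs))
  exact ⟨tₐ, hta0, hin, by rw [isOpen_prismD.frontier_eq]; exact ⟨hclosure, hnP⟩⟩
end

section
/- Let X = (x, y, z) : ℝ → ℝ³ be a solution of the 1-1-1 ABC flow system with X(0) = (-π/2, 0, a) for some a ∈ [0, π/2), and let t_a > 0 be such that X(t) ∈ D for all t ∈ (0, t_a) and X(t_a) ∈ ∂D. Then x(t_a) = 0 or z(t_a) = π/2, and y(t_a) ∈ [-π/2, π/4]. -/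
open Real Set Filter

lemma my_ge_on_Icc {f : ℝ → ℝ} {T c : ℝ} (hT : 0 < T) (hf : Continuous f)
    (h0 : c ≤ f 0) (hin : ∀ t ∈ Set.Ioo 0 T, c < f t) : ∀ t ∈ Set.Icc 0 T, c ≤ f t := by
  rintro t ⟨ht0, ht1⟩
  rcases eq_or_lt_of_le ht0 with rfl | h0t
  · exact h0
  rcases eq_or_lt_of_le ht1 with rfl | htT
  · have htend : Filter.Tendsto f (nhdsWithin t (Set.Iio t)) (nhds (f t)) :=
      (hf.continuousAt).tendsto.mono_left nhdsWithin_le_nhds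
    refine ge_of_tendsto htend ?_
    filter_upwards [Ioo_mem_nhdsLT_of_mem (⟨h0t, le_rfl⟩ : t ∈ Set.Ioc 0 t)] with s hs
    exact (hin s hs).le
  · exact (hin t ⟨h0t, htT⟩).le

lemma my_le_on_Icc {f : ℝ → ℝ} {T c : ℝ} (hT : 0 < T) (hf : Continuous f)
    (h0 : f 0 ≤ c) (hin : ∀ t ∈ Set.Ioo 0 T, f t < c) : ∀ t ∈ Set.Icc 0 T, f t ≤ c := by
  have h := my_ge_on_Icc (f := fun t => -f t) (c := -c) hT hf.neg (by simpa using h0)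
    (fun t ht => by simpa using hin t ht)
  intro t ht
  have := h t ht
  simpa using this

lemma my_stay_nonneg {f F : ℝ → ℝ} {T : ℝ}
    (hf : ∀ t, HasDerivAt f (F t) t) (h0 : 0 ≤ f 0)
    (hK : ∀ t, t ∈ Set.Icc 0 T → f t ≤ 0 → f t ≤ F t) :
    ∀ t ∈ Set.Icc 0 T, 0 ≤ f t := by
  intro t₁ ht₁
  by_contra hneg
  push_neg at hneg
  have hfc : Continuous f := Differentiable.continuous (fun t => (hf t).differentiableAt)
  set S : Set ℝ := Set.Icc 0 t₁ ∩ f ⁻¹' Set.Ici 0 with hSdef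
  have hS0 : (0:ℝ) ∈ S := ⟨⟨le_rfl, ht₁.1⟩, h0⟩
  have hSc : IsClosed S := isClosed_Icc.inter (isClosed_Ici.preimage hfc)
  have hSb : BddAbove S := (bddAbove_Icc).mono Set.inter_subset_left
  set s := sSup S with hsdef
  have hsS : s ∈ S := hSc.csSup_mem ⟨0, hS0⟩ hSb
  have hs0 : 0 ≤ s := hsS.1.1
  have hs1 : s ≤ t₁ := hsS.1.2
  have hfs : 0 ≤ f s := hsS.2
  have hst : s < t₁ := lt_of_le_of_ne hs1 (by intro hss; rw [hss] at hfs; linarith)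
  set g : ℝ → ℝ := fun t => f t * Real.exp (-t) with hgdef
  have hg : ∀ t, HasDerivAt g (F t * Real.exp (-t) + f t * (Real.exp (-t) * (-1))) t := by
    intro t
    have he : HasDerivAt (fun t : ℝ => Real.exp (-t)) (Real.exp (-t) * (-1)) t :=
      (hasDerivAt_neg t).exp
    exact (hf t).mul he
  have hmono : MonotoneOn g (Set.Icc s t₁) := by
    apply monotoneOn_of_deriv_nonneg (convex_Icc s t₁)
    · exact (hfc.mul (Real.continuous_exp.comp continuous_neg)).continuousOn
    · intro t ht
      exact ((hg t).differentiableAt).differentiableWithinAt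
    · intro t ht
      rw [interior_Icc] at ht
      rw [(hg t).deriv]
      have hft : f t ≤ 0 := by
        by_contra hpos
        push_neg at hpos
        have htS : t ∈ S := ⟨⟨hs0.trans ht.1.le, ht.2.le⟩, hpos.le⟩
        exact absurd (le_csSup hSb htS) (not_le.mpr ht.1)
      have hkey := hK t ⟨hs0.trans ht.1.le, ht.2.le.trans ht₁.2⟩ hft
      have he := Real.exp_pos (-t)
      nlinarith
  have hle := hmono ⟨le_rfl, hst.le⟩ ⟨hst.le, le_rfl⟩ hst.le
  have hgs : 0 ≤ f s * Real.exp (-s) := mul_nonneg hfs (Real.exp_pos _).le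
  have hgt : f t₁ * Real.exp (-t₁) < 0 := mul_neg_of_neg_of_pos hneg (Real.exp_pos _)
  simp only [hgdef] at hle
  linarith

lemma trigC {x y : ℝ} (hx : x ≤ 0) (hxy : -(π/2) ≤ x + y) (hyx : y - x ≤ 3*π/2) :
    0 ≤ Real.sin y + Real.cos x := by
  have hπ := Real.pi_pos
  rw [show Real.sin y = Real.cos (π/2 - y) from (Real.cos_pi_div_two_sub y).symm,
    Real.cos_add_cos]
  have a1 : 0 ≤ Real.cos ((π/2 - y + x)/2) :=
    Real.cos_nonneg_of_mem_Icc ⟨by linarith, by linarith⟩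
  have a2 : 0 ≤ Real.cos ((π/2 - y - x)/2) :=
    Real.cos_nonneg_of_mem_Icc ⟨by linarith, by linarith⟩
  positivity

lemma trigD {z : ℝ} (h0 : 0 ≤ z) (h1 : z ≤ π/2) : 1 ≤ Real.sin z + Real.cos z := by
  have hπ := Real.pi_pos
  have hs : 0 ≤ Real.sin z := Real.sin_nonneg_of_nonneg_of_le_pi h0 (by linarith)
  have hc : 0 ≤ Real.cos z := Real.cos_nonneg_of_mem_Icc ⟨by linarith, h1⟩
  nlinarith [Real.sin_sq_add_cos_sq z,
    mul_nonneg hs (by linarith [Real.sin_le_one z] : (0:ℝ) ≤ 1 - Real.sin z),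
    mul_nonneg hc (by linarith [Real.cos_le_one z] : (0:ℝ) ≤ 1 - Real.cos z)]

lemma trigA {x y z : ℝ} (hx : x ≤ 0) (hxy : -(π/2) ≤ x + y) (hyx : y - x ≤ 3*π/2)
    (hz0 : 0 ≤ z) (hz1 : z ≤ π/2) (hzy : z ≤ y) :
    z - y ≤ (Real.sin y + Real.cos x) - (Real.sin x + Real.cos z) := by
  have hπ := Real.pi_pos
  have hy0 : 0 ≤ y := hz0.trans hzy
  rcases le_or_gt y (π/2) with hy2 | hy2
  · -- case y ≤ π/2
    have e2 := Real.cos_sub_cos y z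
    have s2n : 0 ≤ Real.sin ((y - z)/2) :=
      Real.sin_nonneg_of_nonneg_of_le_pi (by linarith) (by linarith)
    have s2le : Real.sin ((y - z)/2) ≤ (y - z)/2 := Real.sin_le (by linarith)
    have s1le : Real.sin ((y + z)/2) ≤ 1 := Real.sin_le_one _
    have hb2 : -(y - z) ≤ Real.cos y - Real.cos z := by
      rw [e2]
      nlinarith [mul_nonneg (by linarith : (0:ℝ) ≤ 1 - Real.sin ((y + z)/2)) s2n]
    have e1 := Real.sin_sub_sin y x
    have e3 := Real.cos_sub_cos x y
    have hA1 : 0 ≤ Real.sin ((y - x)/2) :=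
      Real.sin_nonneg_of_nonneg_of_le_pi (by linarith) (by linarith)
    have hbr : 0 ≤ Real.cos ((x + y)/2) + Real.sin ((x + y)/2) := by
      have hs : 0 ≤ Real.sin ((x + y)/2 + π/4) :=
        Real.sin_nonneg_of_nonneg_of_le_pi (by linarith) (by linarith)
      rw [Real.sin_add, Real.cos_pi_div_four, Real.sin_pi_div_four] at hs
      have h2 : 0 < Real.sqrt 2 := Real.sqrt_pos.mpr (by norm_num)
      nlinarith [hs, h2]
    have hb1 : 0 ≤ Real.sin y - Real.sin x + (Real.cos x - Real.cos y) := by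
      rw [e1, e3, show (x - y)/2 = -((y - x)/2) by ring, Real.sin_neg,
        show (y + x)/2 = (x + y)/2 by ring]
      nlinarith [mul_nonneg hA1 hbr]
    linarith
  · -- case y > π/2
    have hxl : -π ≤ x := by linarith
    have hy3 : y ≤ 3*π/2 := by linarith
    have hsx : Real.sin x ≤ 0 := by
      have h := Real.sin_nonneg_of_nonneg_of_le_pi (x := -x) (by linarith) (by linarith)
      rw [Real.sin_neg] at h; linarith
    have hcx : -1 ≤ Real.cos x := Real.neg_one_le_cos x
    have hcz : Real.cos z ≤ π/2 - z := by
      have h := Real.sin_le (show (0:ℝ) ≤ π/2 - z by linarith)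
      rwa [Real.sin_pi_div_two_sub] at h
    have hsy : π/2 + 1 ≤ Real.sin y + y := by
      have hsin : Real.sin y = Real.cos (y - π/2) := by
        rw [show y = (y - π/2) + π/2 by ring, Real.sin_add_pi_div_two]
        ring_nf
      have hcu : Real.cos (y - π/2) = 1 - 2 * Real.sin ((y - π/2)/2)^2 := by
        have h := Real.cos_two_mul ((y - π/2)/2)
        rw [show 2 * ((y - π/2)/2) = y - π/2 by ring] at h
        nlinarith [Real.sin_sq_add_cos_sq ((y - π/2)/2)]
      have hs0 : 0 ≤ Real.sin ((y - π/2)/2) :=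
        Real.sin_nonneg_of_nonneg_of_le_pi (by linarith) (by linarith)
      have hs1 : Real.sin ((y - π/2)/2) ≤ 1 := Real.sin_le_one _
      have hsu : Real.sin ((y - π/2)/2) ≤ (y - π/2)/2 := Real.sin_le (by linarith)
      have ht : Real.sin ((y - π/2)/2) * Real.sin ((y - π/2)/2) ≤ ((y - π/2)/2) * 1 :=
        mul_le_mul hsu hs1 hs0 (by linarith)
      rw [hsin, hcu]
      nlinarith [ht]
    linarith

lemma trigB {x y z : ℝ} (hx : x ≤ 0) (hxy : -(π/2) ≤ x + y) (hphi : x + π/2 ≤ 2*y)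
    (hyz : y ≤ z) (_hz0 : 0 ≤ z) (hz1 : z ≤ π/2) :
    0 ≤ (Real.sin z + Real.cos y)/2 - (Real.sin x + Real.cos z) := by
  have hπ := Real.pi_pos
  have hy0 : 0 ≤ y := by linarith
  have hy2 : y ≤ π/2 := by linarith
  rcases le_or_gt (π/4) y with hy4 | hy4
  · -- y ≥ π/4
    have hsx : Real.sin x ≤ 0 := by
      have h := Real.sin_nonneg_of_nonneg_of_le_pi (x := -x) (by linarith) (by linarith)
      rw [Real.sin_neg] at h; linarith
    have hcyz : Real.cos z ≤ Real.cos y :=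
      Real.cos_le_cos_of_nonneg_of_le_pi hy0 (by linarith) hyz
    have hsz : Real.cos z ≤ Real.sin z := by
      have e := Real.sin_sub_sin z (π/2 - z)
      have h1 : 0 ≤ Real.sin ((z - (π/2 - z))/2) :=
        Real.sin_nonneg_of_nonneg_of_le_pi (by linarith) (by linarith)
      have h2 : 0 ≤ Real.cos ((z + (π/2 - z))/2) :=
        Real.cos_nonneg_of_mem_Icc ⟨by linarith, by linarith⟩
      have h3 : Real.sin (π/2 - z) = Real.cos z := Real.sin_pi_div_two_sub z
      nlinarith [mul_nonneg h1 h2, e, h3]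
    linarith
  · -- y < π/4
    have hval : Real.sin (2*y - π/2) = -Real.cos (2*y) := by
      rw [Real.sin_sub, Real.cos_pi_div_two, Real.sin_pi_div_two]; ring
    have hsx : Real.sin x ≤ -Real.cos (2*y) := by
      rcases le_or_gt (-(π/2)) x with hxm | hxm
      · have e := Real.sin_sub_sin (2*y - π/2) x
        have h1 : 0 ≤ Real.sin ((2*y - π/2 - x)/2) :=
          Real.sin_nonneg_of_nonneg_of_le_pi (by linarith) (by linarith)
        have h2 : 0 ≤ Real.cos ((2*y - π/2 + x)/2) :=
          Real.cos_nonneg_of_mem_Icc ⟨by linarith, by linarith⟩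
        nlinarith [mul_nonneg h1 h2, e, hval]
      · have hsxx : Real.sin (-π - x) = Real.sin x := by
          rw [show -π - x = -(π + x) by ring, Real.sin_neg, Real.sin_add, Real.sin_pi,
            Real.cos_pi]
          ring
        have e := Real.sin_sub_sin (2*y - π/2) (-π - x)
        have h1 : 0 ≤ Real.sin ((2*y - π/2 - (-π - x))/2) :=
          Real.sin_nonneg_of_nonneg_of_le_pi (by linarith) (by linarith)
        have h2 : 0 ≤ Real.cos ((2*y - π/2 + (-π - x))/2) :=
          Real.cos_nonneg_of_mem_Icc ⟨by linarith, by linarith⟩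
        nlinarith [mul_nonneg h1 h2, e, hval, hsxx]
    have g1 : Real.sin y ≤ Real.sin z := by
      have e := Real.sin_sub_sin z y
      have h1 : 0 ≤ Real.sin ((z - y)/2) :=
        Real.sin_nonneg_of_nonneg_of_le_pi (by linarith) (by linarith)
      have h2 : 0 ≤ Real.cos ((z + y)/2) :=
        Real.cos_nonneg_of_mem_Icc ⟨by linarith, by linarith⟩
      nlinarith [mul_nonneg h1 h2, e]
    have g2 : Real.cos z ≤ Real.cos y :=
      Real.cos_le_cos_of_nonneg_of_le_pi hy0 (by linarith) hyz
    have g3 : 0 ≤ Real.sin y - Real.cos y + 2*Real.cos (2*y) := by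
      have hcc : Real.cos (π/4) ≤ Real.cos y :=
        Real.cos_le_cos_of_nonneg_of_le_pi hy0 (by linarith) (by linarith)
      have hss : Real.sin y ≤ Real.sin (π/4) := by
        have e := Real.sin_sub_sin (π/4) y
        have h1 : 0 ≤ Real.sin ((π/4 - y)/2) :=
          Real.sin_nonneg_of_nonneg_of_le_pi (by linarith) (by linarith)
        have h2 : 0 ≤ Real.cos ((π/4 + y)/2) :=
          Real.cos_nonneg_of_mem_Icc ⟨by linarith, by linarith⟩
        nlinarith [mul_nonneg h1 h2, e]
      rw [Real.cos_pi_div_four] at hcc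
      rw [Real.sin_pi_div_four] at hss
      have h2 : 1 ≤ Real.sqrt 2 := by
        nlinarith [Real.sq_sqrt (show (0:ℝ) ≤ 2 by norm_num), Real.sqrt_nonneg 2]
      have hsy0 : 0 ≤ Real.sin y := Real.sin_nonneg_of_nonneg_of_le_pi hy0 (by linarith)
      have key : 0 ≤ (Real.cos y - Real.sin y) * (2*(Real.cos y + Real.sin y) - 1) :=
        mul_nonneg (by linarith) (by linarith)
      nlinarith [key, Real.sin_sq_add_cos_sq y, Real.cos_two_mul y]
    linarith
theorem stmt12 (x y z : ℝ → ℝ) (h : IsABCSol x y z) (a : ℝ) (ha : a ∈ Set.Ico 0 (π / 2))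
    (hx0 : x 0 = -(π / 2)) (hy0 : y 0 = 0) (hz0 : z 0 = a)
    (tₐ : ℝ) (htₐ : 0 < tₐ) (hin : ∀ t ∈ Set.Ioo 0 tₐ, (x t, y t, z t) ∈ prismD)
    (hbd : (x tₐ, y tₐ, z tₐ) ∈ frontier prismD) :
    (x tₐ = 0 ∨ z tₐ = π / 2) ∧ y tₐ ∈ Set.Icc (-(π / 2)) (π / 4) := by
  have hπ := Real.pi_pos
  obtain ⟨ha0, ha1⟩ := ha
  -- derivatives and continuity
  have hdx : ∀ t, HasDerivAt x (Real.sin (z t) + Real.cos (y t)) t := fun t => (h t).1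
  have hdy : ∀ t, HasDerivAt y (Real.sin (x t) + Real.cos (z t)) t := fun t => (h t).2.1
  have hdz : ∀ t, HasDerivAt z (Real.sin (y t) + Real.cos (x t)) t := fun t => (h t).2.2
  have hcx : Continuous x := Differentiable.continuous (fun t => (hdx t).differentiableAt)
  have hcy : Continuous y := Differentiable.continuous (fun t => (hdy t).differentiableAt)
  have hcz : Continuous z := Differentiable.continuous (fun t => (hdz t).differentiableAt)
  -- strict bounds inside
  have hin' : ∀ t ∈ Set.Ioo 0 tₐ, -(π/2) < x t + y t ∧ y t - x t < 3*π/2 ∧ x t < 0 ∧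
      0 < z t ∧ z t < π/2 := by
    intro t ht
    have := hin t ht
    simp only [prismD, triR, Set.mem_setOf_eq] at this
    refine ⟨this.1.1, by linarith [this.1.2.1], this.1.2.2, this.2.1, this.2.2⟩
  -- closure bounds on [0, tₐ]
  have b1 : ∀ t ∈ Set.Icc 0 tₐ, -(π/2) ≤ x t + y t :=
    my_ge_on_Icc htₐ (hcx.add hcy) (by rw [hx0, hy0]; linarith)
      (fun t ht => (hin' t ht).1)
  have b2 : ∀ t ∈ Set.Icc 0 tₐ, y t - x t ≤ 3*π/2 :=
    my_le_on_Icc htₐ (hcy.sub hcx) (by rw [hx0, hy0]; linarith)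
      (fun t ht => (hin' t ht).2.1)
  have b3 : ∀ t ∈ Set.Icc 0 tₐ, x t ≤ 0 :=
    my_le_on_Icc htₐ hcx (by rw [hx0]; linarith) (fun t ht => (hin' t ht).2.2.1)
  have b4 : ∀ t ∈ Set.Icc 0 tₐ, 0 ≤ z t :=
    my_ge_on_Icc htₐ hcz (by rw [hz0]; linarith) (fun t ht => (hin' t ht).2.2.2.1)
  have b5 : ∀ t ∈ Set.Icc 0 tₐ, z t ≤ π/2 :=
    my_le_on_Icc htₐ hcz (by rw [hz0]; linarith) (fun t ht => (hin' t ht).2.2.2.2)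
  -- invariant 1 : y ≤ z on [0, tₐ]
  have hψ : ∀ t ∈ Set.Icc 0 tₐ, 0 ≤ z t - y t := by
    apply my_stay_nonneg (F := fun t =>
      (Real.sin (y t) + Real.cos (x t)) - (Real.sin (x t) + Real.cos (z t)))
    · exact fun t => (hdz t).sub (hdy t)
    · rw [hz0, hy0]; linarith
    · intro t ht hneg
      have := trigA (b3 t ht) (b1 t ht) (b2 t ht) (b4 t ht) (b5 t ht) (by linarith)
      linarith
  -- invariant 2 : y ≤ (x + π/2)/2 on [0, tₐ]
  have hφ : ∀ t ∈ Set.Icc 0 tₐ, 0 ≤ (x t + π/2)/2 - y t := by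
    apply my_stay_nonneg (F := fun t =>
      (Real.sin (z t) + Real.cos (y t))/2 - (Real.sin (x t) + Real.cos (z t)))
    · intro t
      exact (((hdx t).add_const (π/2)).div_const 2).sub (hdy t)
    · rw [hx0, hy0]; ring_nf; rfl
    · intro t ht hneg
      have hB := trigB (b3 t ht) (b1 t ht) (by linarith) (by linarith [hψ t ht])
        (b4 t ht) (b5 t ht)
      linarith
  -- z is monotone, hence z tₐ > 0
  have hzmono : MonotoneOn z (Set.Icc 0 tₐ) := by
    apply monotoneOn_of_deriv_nonneg (convex_Icc 0 tₐ) hcz.continuousOn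
    · intro t ht
      exact ((hdz t).differentiableAt).differentiableWithinAt
    · intro t ht
      rw [interior_Icc] at ht
      rw [(hdz t).deriv]
      exact trigC (b3 t ⟨ht.1.le, ht.2.le⟩) (b1 t ⟨ht.1.le, ht.2.le⟩) (b2 t ⟨ht.1.le, ht.2.le⟩)
  have hztₐ : 0 < z tₐ := by
    have hmem : tₐ/2 ∈ Set.Ioo (0:ℝ) tₐ := ⟨by linarith, by linarith⟩
    have h1 := (hin' _ hmem).2.2.2.1
    have h2 : z (tₐ/2) ≤ z tₐ :=
      hzmono (Set.mem_Icc.mpr ⟨by linarith, by linarith⟩)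
        (Set.mem_Icc.mpr ⟨htₐ.le, le_rfl⟩) (by linarith)
    linarith
  -- facts at tₐ
  have htmem : tₐ ∈ Set.Icc (0:ℝ) tₐ := ⟨htₐ.le, le_rfl⟩
  have c1 := b1 tₐ htmem
  have c3 := b3 tₐ htmem
  have c5 := b5 tₐ htmem
  have cφ := hφ tₐ htmem
  have hy_ub : y tₐ ≤ π/4 := by linarith
  have hy_lb : -(π/2) ≤ y tₐ := by linarith
  -- rule out x + y = -π/2 at tₐ
  have hxy_ne : x tₐ + y tₐ ≠ -(π/2) := by
    intro heq
    have hD : HasDerivAt (fun t => x t + y t)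
        ((Real.sin (z tₐ) + Real.cos (y tₐ)) + (Real.sin (x tₐ) + Real.cos (z tₐ))) tₐ :=
      (hdx tₐ).add (hdy tₐ)
    have hcy' : Real.cos (y tₐ) = -Real.sin (x tₐ) := by
      have hy' : y tₐ = -(π/2 + x tₐ) := by linarith
      rw [hy', Real.cos_neg, Real.cos_add, Real.cos_pi_div_two, Real.sin_pi_div_two]
      ring
    have hpos : 1 ≤ (Real.sin (z tₐ) + Real.cos (y tₐ)) + (Real.sin (x tₐ) + Real.cos (z tₐ)) := by
      linarith [trigD (b4 tₐ htmem) c5, hcy']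
    have hslope : Filter.Tendsto (slope (fun t => x t + y t) tₐ) (nhdsWithin tₐ (Set.Iio tₐ))
        (nhds ((Real.sin (z tₐ) + Real.cos (y tₐ)) + (Real.sin (x tₐ) + Real.cos (z tₐ)))) :=
      (hasDerivAt_iff_tendsto_slope.mp hD).mono_left
        (nhdsWithin_mono _ (fun u hu => ne_of_lt hu))
    have hle : (Real.sin (z tₐ) + Real.cos (y tₐ)) + (Real.sin (x tₐ) + Real.cos (z tₐ)) ≤ 0 := by
      refine le_of_tendsto hslope ?_
      filter_upwards [Ioo_mem_nhdsLT_of_mem (⟨htₐ, le_rfl⟩ : tₐ ∈ Set.Ioc 0 tₐ)] with u hu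
      rw [slope_def_field]
      apply div_nonpos_of_nonneg_of_nonpos
      · have := (hin' u hu).1
        rw [heq]; linarith
      · linarith [hu.2]
    linarith
  -- the point is not in the open prism
  have hopen : IsOpen prismD := by
    have : prismD = {p : ℝ × ℝ × ℝ | -(π/2) < p.1 + p.2.1} ∩
        ({p : ℝ × ℝ × ℝ | p.2.1 - p.1 < 3*π/2} ∩ ({p : ℝ × ℝ × ℝ | p.1 < 0} ∩
        ({p : ℝ × ℝ × ℝ | 0 < p.2.2} ∩ {p : ℝ × ℝ × ℝ | p.2.2 < π/2}))) := by
      ext p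
      simp only [prismD, triR, Set.mem_setOf_eq, Set.mem_inter_iff]
      constructor
      · rintro ⟨⟨u1, u2, u3⟩, u4, u5⟩
        exact ⟨u1, by linarith, u3, u4, u5⟩
      · rintro ⟨u1, u2, u3, u4, u5⟩
        exact ⟨⟨u1, by linarith, u3⟩, u4, u5⟩
    rw [this]
    refine (isOpen_lt continuous_const (continuous_fst.add
      (continuous_fst.comp continuous_snd))).inter ?_
    refine (isOpen_lt ((continuous_fst.comp continuous_snd).sub continuous_fst)
      continuous_const).inter ?_
    refine (isOpen_lt continuous_fst continuous_const).inter ?_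
    exact (isOpen_lt continuous_const (continuous_snd.comp continuous_snd)).inter
      (isOpen_lt (continuous_snd.comp continuous_snd) continuous_const)
  have hnotmem : (x tₐ, y tₐ, z tₐ) ∉ prismD := by
    intro hmem
    have := hbd.2
    rw [hopen.interior_eq] at this
    exact this hmem
  -- conclude
  have hdisj : x tₐ = 0 ∨ z tₐ = π/2 := by
    by_contra hc
    push_neg at hc
    apply hnotmem
    simp only [prismD, triR, Set.mem_setOf_eq]
    refine ⟨⟨lt_of_le_of_ne c1 (Ne.symm hxy_ne), ?_, lt_of_le_of_ne c3 hc.1⟩, hztₐ,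
      lt_of_le_of_ne c5 hc.2⟩
    linarith
  exact ⟨hdisj, hy_lb, hy_ub⟩
end

section
/- Let X = (x, y, z) : ℝ → ℝ³ be a solution of the 1-1-1 ABC flow system with X(0) = (-π/2, 0, 0), and let t₀ > 0 be such that X(t) ∈ D for all t ∈ (0, t₀) and X(t₀) ∈ ∂D. Then x(t₀) = 0 and z(t₀) < π/2. -/
open Real Set Filter Topology

-- helper: endpoint inequality by continuity
lemma endpoint_le {f g : ℝ → ℝ} (hf : Continuous f) (hg : Continuous g) {a b : ℝ}
    (hab : a < b) (h : ∀ t ∈ Set.Ioo a b, f t ≤ g t) : f b ≤ g b := by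
  have h1 : b ∈ closure (Set.Ioo a b) := by
    rw [closure_Ioo hab.ne]; exact ⟨hab.le, le_refl b⟩
  have h2 : closure (Set.Ioo a b) ⊆ {t | f t ≤ g t} :=
    closure_minimal (fun t ht => h t ht) (isClosed_le hf hg)
  exact h2 h1

-- helper: strict increase via positive derivative
lemma lt_endpoints {f f' : ℝ → ℝ} (hd : ∀ t, HasDerivAt f (f' t) t) {a b : ℝ}
    (hab : a < b) (hpos : ∀ t ∈ Set.Ioo a b, 0 < f' t) : f a < f b := by
  have hc : Continuous f := continuous_iff_continuousAt.2 fun t => (hd t).continuousAt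
  have hm := strictMonoOn_of_deriv_pos (convex_Icc a b) hc.continuousOn
    (fun t ht => by
      rw [interior_Icc] at ht
      rw [(hd t).deriv]; exact hpos t ht)
  exact hm (left_mem_Icc.2 hab.le) (right_mem_Icc.2 hab.le) hab

-- helper: nonstrict increase via nonneg derivative
lemma le_endpoints {f f' : ℝ → ℝ} (hd : ∀ t, HasDerivAt f (f' t) t) {a b : ℝ}
    (hab : a ≤ b) (hpos : ∀ t ∈ Set.Ioo a b, 0 ≤ f' t) : f a ≤ f b := by
  have hc : Continuous f := continuous_iff_continuousAt.2 fun t => (hd t).continuousAt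
  have hm := monotoneOn_of_deriv_nonneg (convex_Icc a b) hc.continuousOn
    (fun t ht => by
      rw [interior_Icc] at ht
      exact (hd t).differentiableAt.differentiableWithinAt)
    (fun t ht => by
      rw [interior_Icc] at ht
      rw [(hd t).deriv]; exact hpos t ht)
  exact hm (left_mem_Icc.2 hab) (right_mem_Icc.2 hab) hab

-- helper: left derivative nonpositive at a minimum from the left
lemma left_deriv_nonpos {w : ℝ → ℝ} {d a b : ℝ} (hw : HasDerivAt w d b) (hab : a < b)
    (hpos : ∀ t ∈ Set.Ioo a b, w b < w t) : d ≤ 0 := by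
  have T : Tendsto (slope w b) (𝓝[<] b) (𝓝 d) :=
    (hasDerivAt_iff_tendsto_slope.mp hw).mono_left
      (nhdsWithin_mono b fun t ht => ne_of_lt ht)
  have hev : ∀ᶠ t in 𝓝[<] b, slope w b t ≤ 0 := by
    filter_upwards [Ioo_mem_nhdsLT hab] with t ht
    have h1 : 0 < w t - w b := sub_pos.2 (hpos t ht)
    have h2 : t - b < 0 := sub_neg.2 ht.2
    rw [slope_def_field]
    exact le_of_lt (div_neg_of_pos_of_neg h1 h2)
  exact le_of_tendsto T hev

-- helper: positive just to the right when derivative positive at a zero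
lemma pos_right_s13 {w : ℝ → ℝ} {d : ℝ} (hw : HasDerivAt w d 0) (h0 : w 0 = 0) (hd : 0 < d) :
    ∃ δ > 0, ∀ t ∈ Set.Ioo (0:ℝ) δ, 0 < w t := by
  have T : Tendsto (slope w 0) (𝓝[>] (0:ℝ)) (𝓝 d) :=
    (hasDerivAt_iff_tendsto_slope.mp hw).mono_left
      (nhdsWithin_mono 0 fun t ht => ne_of_gt ht)
  have hev : ∀ᶠ t in 𝓝[>] (0:ℝ), 0 < slope w 0 t := T.eventually (eventually_gt_nhds hd)
  rw [eventually_iff, mem_nhdsGT_iff_exists_Ioo_subset] at hev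
  obtain ⟨u, hu, hsub⟩ := hev
  refine ⟨u, hu, fun t ht => ?_⟩
  have := hsub ht
  rw [mem_setOf_eq, slope_def_field, h0, sub_zero, sub_zero] at this
  have ht0 : 0 < t := ht.1
  have h2 : 0 < (w t / t) * t := mul_pos this ht0
  rwa [div_mul_cancel₀ _ (ne_of_gt ht0)] at h2

lemma arith_y' {X Z : ℝ} (h1 : 0 ≤ Z) (h2 : Z < X + π/2) (h3 : X ≤ π/2) :
    0 < Real.sin X + Real.cos Z := by
  have hc : Real.cos (X + π/2) < Real.cos Z :=
    Real.cos_lt_cos_of_nonneg_of_le_pi h1 (by linarith [Real.pi_pos]) h2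
  rw [Real.cos_add_pi_div_two] at hc
  linarith

lemma arith_z' {X Y : ℝ} (h1 : 0 < Y) (h2 : Y < π) (h3 : -(π/2) < X) (h4 : X < π/2) :
    0 < Real.sin Y + Real.cos X := by
  have := Real.sin_pos_of_pos_of_lt_pi h1 h2
  have := Real.cos_pos_of_mem_Ioo ⟨h3, h4⟩
  linarith

lemma arith_k' {X Y Z : ℝ} (hX1 : -π ≤ X) (hX2 : X ≤ 0) (hY : 0 ≤ Y) (hYZ : Y ≤ Z)
    (hZ : Z ≤ π/2) :
    0 ≤ (Real.sin Z + Real.cos Y) - (-Real.sin X * (Real.sin Z + Real.cos Y))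
        - (Real.sin X + Real.cos Z) := by
  have h1 : Real.cos Z ≤ Real.cos Y :=
    Real.cos_le_cos_of_nonneg_of_le_pi hY (by linarith [Real.pi_pos]) hYZ
  have h2 : 0 ≤ 1 + Real.sin X := by linarith [Real.neg_one_le_sin X]
  have h3 : 0 ≤ Real.sin Z := Real.sin_nonneg_of_nonneg_of_le_pi (le_trans hY hYZ)
    (by linarith [Real.pi_pos])
  have h4 : Real.sin X ≤ 0 := Real.sin_nonpos_of_nonpos_of_neg_pi_le hX2 hX1
  have h5 : Real.cos Z ≤ 1 := Real.cos_le_one Z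
  nlinarith [mul_nonneg h2 (sub_nonneg.2 h1), mul_nonneg h2 h3,
    mul_nonneg (neg_nonneg.2 h4) (sub_nonneg.2 h5)]

lemma sqrt2_form (u : ℝ) : Real.cos u - Real.sin u = Real.sqrt 2 * Real.cos (u + π/4) := by
  rw [Real.cos_add, Real.cos_pi_div_four, Real.sin_pi_div_four]
  have h2 : Real.sqrt 2 ^ 2 = 2 := Real.sq_sqrt (by norm_num)
  linear_combination (-(Real.cos u - Real.sin u)/2) * h2

lemma arith_w' {X C : ℝ} (h1 : 0 < C) (h2 : C ≤ π/2) (h3 : C - π/2 ≤ X) (h4 : X ≤ 0) :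
    0 < Real.sin C + Real.cos X - (Real.sin X + Real.cos C) := by
  have key : Real.cos (C + π/4) < Real.cos (X + π/4) := by
    rw [← Real.cos_abs (X + π/4)]
    apply Real.cos_lt_cos_of_nonneg_of_le_pi (abs_nonneg _) (by linarith [Real.pi_pos])
    rw [abs_lt]
    constructor <;> linarith [Real.pi_pos]
  have e1 := sqrt2_form X
  have e2 := sqrt2_form C
  have hs : 0 < Real.sqrt 2 := Real.sqrt_pos.2 (by norm_num)
  nlinarith [mul_lt_mul_of_pos_left key hs]

lemma arith_g' {Y : ℝ} (h1 : 0 ≤ Y) (h2 : Y ≤ π/2 - 1) : 0 < Real.cos Y - Real.sin Y := by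
  rw [sqrt2_form Y]
  have hs : 0 < Real.sqrt 2 := Real.sqrt_pos.2 (by norm_num)
  have hpi : π ≤ 4 := Real.pi_le_four
  have : 0 < Real.cos (Y + π/4) := by
    apply Real.cos_pos_of_mem_Ioo
    constructor
    · nlinarith [Real.pi_gt_three]
    · nlinarith [Real.pi_lt_d2]
  positivity

lemma cos_ge {X : ℝ} (h1 : -(π/2) ≤ X) (h2 : X ≤ 0) : X + 1 ≤ Real.cos X := by
  set b := -X with hb
  have hb0 : 0 ≤ b := by simp [hb]; linarith
  have hb2 : b ≤ π/2 := by simp [hb]; linarith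
  have hX : Real.cos X = Real.cos b := by rw [hb, Real.cos_neg]
  have hsle : Real.sin (b/2) ≤ b/2 := by
    rcases eq_or_lt_of_le hb0 with h | h
    · simp [← h]
    · exact le_of_lt (Real.sin_lt (by linarith))
  have hsn : 0 ≤ Real.sin (b/2) := Real.sin_nonneg_of_nonneg_of_le_pi (by linarith)
    (by nlinarith [Real.pi_gt_three])
  have hcos : Real.cos b = 1 - 2 * Real.sin (b/2)^2 := by
    have e1 := Real.cos_two_mul' (b/2)
    have e2 := Real.sin_sq_add_cos_sq (b/2)
    have e3 : (2:ℝ)*(b/2) = b := by ring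
    rw [e3] at e1; linarith
  have hs2 : Real.sin (b/2)^2 ≤ (b/2)^2 := by nlinarith
  have hble : b ≤ 2 := by linarith [Real.pi_le_four]
  rw [hX, hcos]
  nlinarith [mul_nonneg hb0 (sub_nonneg.2 hble)]

theorem stmt13 (x y z : ℝ → ℝ) (h : IsABCSol x y z)
    (hx0 : x 0 = -(π / 2)) (hy0 : y 0 = 0) (hz0 : z 0 = 0)
    (t₀ : ℝ) (ht₀ : 0 < t₀) (hin : ∀ t ∈ Set.Ioo 0 t₀, (x t, y t, z t) ∈ prismD)
    (hbd : (x t₀, y t₀, z t₀) ∈ frontier prismD) :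
    x t₀ = 0 ∧ z t₀ < π / 2 := by
  have hx : ∀ t, HasDerivAt x (Real.sin (z t) + Real.cos (y t)) t := fun t => (h t).1
  have hy : ∀ t, HasDerivAt y (Real.sin (x t) + Real.cos (z t)) t := fun t => (h t).2.1
  have hz : ∀ t, HasDerivAt z (Real.sin (y t) + Real.cos (x t)) t := fun t => (h t).2.2
  have cx : Continuous x := continuous_iff_continuousAt.2 fun t => (hx t).continuousAt
  have cy : Continuous y := continuous_iff_continuousAt.2 fun t => (hy t).continuousAt
  have cz : Continuous z := continuous_iff_continuousAt.2 fun t => (hz t).continuousAt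
  have hinD : ∀ t ∈ Set.Ioo 0 t₀,
      (-(π/2) < x t + y t ∧ y t - x t < 3*π/2 ∧ x t < 0) ∧ 0 < z t ∧ z t < π/2 := by
    intro t ht
    have := hin t ht
    simpa [prismD, triR, Set.mem_setOf_eq] using this
  -- derivative packages
  have hg : ∀ t, HasDerivAt (fun s => x s + π/2 - z s)
      ((Real.sin (z t) + Real.cos (y t)) - (Real.sin (y t) + Real.cos (x t))) t :=
    fun t => ((hx t).add_const (π/2)).sub (hz t)
  have hw : ∀ t, HasDerivAt (fun s => z s - y s)
      ((Real.sin (y t) + Real.cos (x t)) - (Real.sin (x t) + Real.cos (z t))) t :=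
    fun t => (hz t).sub (hy t)
  have hk : ∀ t, HasDerivAt (fun s => x s + π/2 - Real.cos (x s) - y s)
      ((Real.sin (z t) + Real.cos (y t))
        - (-Real.sin (x t) * (Real.sin (z t) + Real.cos (y t)))
        - (Real.sin (x t) + Real.cos (z t))) t :=
    fun t => (((hx t).add_const (π/2)).sub ((hx t).cos)).sub (hy t)
  -- entry: G = derivative of g is positive near 0
  have hG0 : (Real.sin (z 0) + Real.cos (y 0)) - (Real.sin (y 0) + Real.cos (x 0)) = 1 := by
    rw [hx0, hy0, hz0]; simp
  have cG : Continuous (fun t => (Real.sin (z t) + Real.cos (y t))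
      - (Real.sin (y t) + Real.cos (x t))) :=
    ((Real.continuous_sin.comp cz).add (Real.continuous_cos.comp cy)).sub
      ((Real.continuous_sin.comp cy).add (Real.continuous_cos.comp cx))
  have hev : ∀ᶠ t in 𝓝 (0:ℝ), 0 < (Real.sin (z t) + Real.cos (y t))
      - (Real.sin (y t) + Real.cos (x t)) := by
    have hT : Tendsto (fun t => (Real.sin (z t) + Real.cos (y t))
        - (Real.sin (y t) + Real.cos (x t))) (𝓝 0) (𝓝 1) := by
      rw [← hG0]; exact cG.continuousAt
    exact hT.eventually (eventually_gt_nhds one_pos)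
  rw [Metric.eventually_nhds_iff] at hev
  obtain ⟨ε₁, hε₁, hball⟩ := hev
  -- entry: φ = derivative of w is positive just right of 0
  have hφd : HasDerivAt (fun t => (Real.sin (y t) + Real.cos (x t))
      - (Real.sin (x t) + Real.cos (z t))) 1 0 := by
    have h1 := (((hy 0).sin.add ((hx 0).cos)).sub (((hx 0).sin.add ((hz 0).cos))))
    have he : (Real.cos (y 0) * (Real.sin (x 0) + Real.cos (z 0))
        + (-Real.sin (x 0) * (Real.sin (z 0) + Real.cos (y 0))))
        - (Real.cos (x 0) * (Real.sin (z 0) + Real.cos (y 0))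
        + (-Real.sin (z 0) * (Real.sin (y 0) + Real.cos (x 0)))) = 1 := by
      rw [hx0, hy0, hz0]; simp
    rw [he] at h1
    exact h1
  have hφ0 : (Real.sin (y 0) + Real.cos (x 0)) - (Real.sin (x 0) + Real.cos (z 0)) = 0 := by
    rw [hx0, hy0, hz0]; simp
  obtain ⟨ε₂, hε₂, hφpos⟩ := pos_right_s13 hφd hφ0 one_pos
  -- the entry scale
  set δ := min (min (ε₁/2) ε₂) t₀ with hδdef
  have hδpos : 0 < δ := lt_min (lt_min (by linarith) hε₂) ht₀
  have hδt₀ : δ ≤ t₀ := min_le_right _ _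
  have hδε₁ : δ ≤ ε₁/2 := le_trans (min_le_left _ _) (min_le_left _ _)
  have hδε₂ : δ ≤ ε₂ := le_trans (min_le_left _ _) (min_le_right _ _)
  have hg0 : x 0 + π/2 - z 0 = 0 := by rw [hx0, hz0]; ring
  have hw0 : z 0 - y 0 = 0 := by rw [hy0, hz0]; ring
  have hk0 : x 0 + π/2 - Real.cos (x 0) - y 0 = 0 := by
    rw [hx0, hy0]; simp
  have hgpos : ∀ t ∈ Set.Ioc 0 δ, 0 < x t + π/2 - z t := by
    intro t ht
    have h1 : x 0 + π/2 - z 0 < x t + π/2 - z t := by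
      apply lt_endpoints hg ht.1
      intro τ hτ
      apply hball
      rw [Real.dist_eq, sub_zero, abs_of_pos hτ.1]
      have : τ < ε₁ := by
        have := hτ.2
        have := ht.2
        linarith
      exact this
    linarith [hg0]
  have hwpos : ∀ t ∈ Set.Ioc 0 δ, 0 < z t - y t := by
    intro t ht
    have h1 : z 0 - y 0 < z t - y t := by
      apply lt_endpoints hw ht.1
      intro τ hτ
      exact hφpos τ ⟨hτ.1, by linarith [hτ.2, ht.2]⟩
    linarith [hw0]
  have hypos : ∀ t ∈ Set.Ioc 0 δ, 0 < y t := by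
    intro t ht
    have h1 : y 0 < y t := by
      apply lt_endpoints hy ht.1
      intro τ hτ
      have hτδ : τ ∈ Set.Ioc 0 δ := ⟨hτ.1, le_of_lt (lt_of_lt_of_le hτ.2 ht.2)⟩
      have hτD := hinD τ ⟨hτ.1, by linarith [hτ.2, ht.2, hδt₀]⟩
      exact arith_y' (le_of_lt hτD.2.1) (by linarith [hgpos τ hτδ]) (by linarith [hτD.1.2.2, Real.pi_pos])
    linarith [hy0]
  -- the bad set is empty
  have hQempty : {t : ℝ | (y t ≤ 0 ∨ z t ≤ y t ∨ x t + π/2 ≤ z t)} ∩ Set.Icc δ t₀ = ∅ := by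
    by_contra hne
    have hQne : ({t : ℝ | (y t ≤ 0 ∨ z t ≤ y t ∨ x t + π/2 ≤ z t)} ∩ Set.Icc δ t₀).Nonempty :=
      Set.nonempty_iff_ne_empty.2 hne
    have hQclosed : IsClosed ({t : ℝ | (y t ≤ 0 ∨ z t ≤ y t ∨ x t + π/2 ≤ z t)} ∩ Set.Icc δ t₀) := by
      apply IsClosed.inter _ isClosed_Icc
      have c1 : IsClosed {t : ℝ | y t ≤ 0} := isClosed_le cy continuous_const
      have c2 : IsClosed {t : ℝ | z t ≤ y t} := isClosed_le cz cy
      have c3 : IsClosed {t : ℝ | x t + π/2 ≤ z t} := isClosed_le (cx.add continuous_const) cz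
      have he : {t : ℝ | (y t ≤ 0 ∨ z t ≤ y t ∨ x t + π/2 ≤ z t)}
          = {t | y t ≤ 0} ∪ ({t | z t ≤ y t} ∪ {t | x t + π/2 ≤ z t}) := by
        ext τ; simp [Set.mem_union, Set.mem_setOf_eq]
      rw [he]; exact c1.union (c2.union c3)
    have hbdd : BddBelow ({t : ℝ | (y t ≤ 0 ∨ z t ≤ y t ∨ x t + π/2 ≤ z t)} ∩ Set.Icc δ t₀) :=
      ⟨δ, fun t ht => ht.2.1⟩
    set t₁ := sInf ({t : ℝ | (y t ≤ 0 ∨ z t ≤ y t ∨ x t + π/2 ≤ z t)} ∩ Set.Icc δ t₀) with ht₁def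
    have ht₁Q := hQclosed.csInf_mem hQne hbdd
    rw [← ht₁def] at ht₁Q
    have ht₁δ : δ ≤ t₁ := ht₁Q.2.1
    have ht₁t₀ : t₁ ≤ t₀ := ht₁Q.2.2
    have ht₁pos : 0 < t₁ := lt_of_lt_of_le hδpos ht₁δ
    -- invariants strictly before t₁
    have hInv : ∀ t ∈ Set.Ioo 0 t₁, 0 < y t ∧ y t < z t ∧ z t < x t + π/2 := by
      intro t ht
      rcases le_or_gt t δ with hle | hlt
      · exact ⟨hypos t ⟨ht.1, hle⟩, by linarith [hwpos t ⟨ht.1, hle⟩],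
          by linarith [hgpos t ⟨ht.1, hle⟩]⟩
      · have htQ : t ∉ ({t : ℝ | (y t ≤ 0 ∨ z t ≤ y t ∨ x t + π/2 ≤ z t)} ∩ Set.Icc δ t₀) :=
          fun htQ => absurd (csInf_le hbdd htQ) (not_le.2 ht.2)
        have h2 : ¬(y t ≤ 0 ∨ z t ≤ y t ∨ x t + π/2 ≤ z t) :=
          fun hc => htQ ⟨hc, ⟨hlt.le, by linarith [ht.2]⟩⟩
        push_neg at h2
        exact ⟨h2.1, h2.2.1, h2.2.2⟩
    have hD : ∀ t ∈ Set.Ioo 0 t₁,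
        (-(π/2) < x t + y t ∧ y t - x t < 3*π/2 ∧ x t < 0) ∧ 0 < z t ∧ z t < π/2 :=
      fun t ht => hinD t ⟨ht.1, lt_of_lt_of_le ht.2 ht₁t₀⟩
    -- nonstrict facts at t₁ by continuity
    have f1 : 0 ≤ y t₁ :=
      endpoint_le (f := fun _ => (0:ℝ)) (g := y) continuous_const cy ht₁pos
        (fun t ht => (hInv t ht).1.le)
    have f2 : y t₁ ≤ z t₁ :=
      endpoint_le (f := y) (g := z) cy cz ht₁pos (fun t ht => (hInv t ht).2.1.le)
    have f3 : z t₁ ≤ x t₁ + π/2 :=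
      endpoint_le (f := z) (g := fun s => x s + π/2) cz (cx.add continuous_const) ht₁pos
        (fun t ht => (hInv t ht).2.2.le)
    have f4 : x t₁ ≤ 0 :=
      endpoint_le (f := x) (g := fun _ => (0:ℝ)) cx continuous_const ht₁pos
        (fun t ht => (hD t ht).1.2.2.le)
    have f5 : z t₁ ≤ π/2 :=
      endpoint_le (f := z) (g := fun _ => π/2) cz continuous_const ht₁pos
        (fun t ht => (hD t ht).2.2.le)
    -- strict positivity of y and z at t₁
    have hs : (δ/2) ∈ Set.Ioc 0 δ := ⟨by linarith, by linarith⟩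
    have hslt : δ/2 < t₁ := by linarith
    have ypos1 : 0 < y t₁ := by
      have h1 : y (δ/2) < y t₁ := by
        apply lt_endpoints hy hslt
        intro τ hτ
        have hτI : τ ∈ Set.Ioo 0 t₁ := ⟨by linarith [hτ.1], hτ.2⟩
        obtain ⟨i1, i2, i3⟩ := hInv τ hτI
        have hDτ := hD τ hτI
        exact arith_y' (by linarith) i3 (by linarith [hDτ.1.2.2, Real.pi_pos])
      linarith [hypos (δ/2) hs]
    have zpos1 : 0 < z t₁ := by
      have h1 : z (δ/2) < z t₁ := by
        apply lt_endpoints hz hslt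
        intro τ hτ
        have hτI : τ ∈ Set.Ioo 0 t₁ := ⟨by linarith [hτ.1], hτ.2⟩
        obtain ⟨i1, i2, i3⟩ := hInv τ hτI
        have hDτ := hD τ hτI
        exact arith_z' i1 (by linarith [hDτ.2.2, Real.pi_pos]) (by linarith)
          (by linarith [hDτ.1.2.2, Real.pi_pos])
      have hw2 := hwpos (δ/2) hs
      have hy2 := hypos (δ/2) hs
      linarith
    -- the k-invariant at t₁
    have hk1 : 0 ≤ x t₁ + π/2 - Real.cos (x t₁) - y t₁ := by
      have h1 := le_endpoints hk (le_of_lt ht₁pos) (fun τ hτ => by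
        obtain ⟨i1, i2, i3⟩ := hInv τ hτ
        have hDτ := hD τ hτ
        exact arith_k' (by linarith [Real.pi_pos]) (le_of_lt hDτ.1.2.2) (le_of_lt i1)
          (le_of_lt i2) (le_of_lt hDτ.2.2))
      linarith [hk0]
    have hx₁lb : -(π/2) < x t₁ := by linarith
    have yb : y t₁ ≤ π/2 - 1 := by
      have := cos_ge (X := x t₁) (le_of_lt hx₁lb) f4
      linarith
    -- case analysis on the violated constraint at t₁
    rcases ht₁Q.1 with hcase | hcase | hcase
    · linarith
    · have heq : z t₁ = y t₁ := le_antisymm hcase f2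
      have hd0 := left_deriv_nonpos (hw t₁) ht₁pos (fun t ht => by
        show z t₁ - y t₁ < z t - y t
        have := (hInv t ht).2.1
        linarith)
      have hval : 0 < Real.sin (y t₁) + Real.cos (x t₁) - (Real.sin (x t₁) + Real.cos (z t₁)) := by
        rw [heq]
        exact arith_w' ypos1 (by linarith) (by linarith) f4
      linarith
    · have heq : z t₁ = x t₁ + π/2 := le_antisymm f3 hcase
      have hd0 := left_deriv_nonpos (hg t₁) ht₁pos (fun t ht => by
        show x t₁ + π/2 - z t₁ < x t + π/2 - z t
        have := (hInv t ht).2.2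
        linarith)
      have hval : 0 < (Real.sin (z t₁) + Real.cos (y t₁)) - (Real.sin (y t₁) + Real.cos (x t₁)) := by
        rw [heq, Real.sin_add_pi_div_two]
        linarith [arith_g' f1 yb]
      linarith
  -- invariants on all of (0, t₀]
  have key : ∀ t ∈ Set.Ioc 0 t₀, 0 < y t ∧ y t < z t ∧ z t < x t + π/2 := by
    intro t ht
    rcases le_or_gt t δ with hle | hlt
    · exact ⟨hypos t ⟨ht.1, hle⟩, by linarith [hwpos t ⟨ht.1, hle⟩],
        by linarith [hgpos t ⟨ht.1, hle⟩]⟩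
    · have htQ : t ∉ ({t : ℝ | (y t ≤ 0 ∨ z t ≤ y t ∨ x t + π/2 ≤ z t)} ∩ Set.Icc δ t₀) := by
        rw [hQempty]; exact Set.notMem_empty t
      have h2 : ¬(y t ≤ 0 ∨ z t ≤ y t ∨ x t + π/2 ≤ z t) :=
        fun hc => htQ ⟨hc, ⟨hlt.le, ht.2⟩⟩
      push_neg at h2
      exact ⟨h2.1, h2.2.1, h2.2.2⟩
  obtain ⟨ky, kyz, kzx⟩ := key t₀ ⟨ht₀, le_refl _⟩
  have hx₀le : x t₀ ≤ 0 :=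
    endpoint_le (f := x) (g := fun _ => (0:ℝ)) cx continuous_const ht₀
      (fun t ht => (hinD t ht).1.2.2.le)
  have hzlt : z t₀ < π/2 := by linarith
  refine ⟨?_, hzlt⟩
  have hopen : IsOpen prismD := by
    have he : prismD = {p : ℝ × ℝ × ℝ | -(π/2) < p.1 + p.2.1}
        ∩ ({p : ℝ × ℝ × ℝ | p.2.1 - p.1 < 3*π/2} ∩ ({p : ℝ × ℝ × ℝ | p.1 < 0}
        ∩ ({p : ℝ × ℝ × ℝ | 0 < p.2.2} ∩ {p : ℝ × ℝ × ℝ | p.2.2 < π/2}))) := by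
      ext p
      simp only [prismD, triR, Set.mem_setOf_eq, Set.mem_inter_iff]
      tauto
    rw [he]
    refine IsOpen.inter ?_ (IsOpen.inter ?_ (IsOpen.inter ?_ (IsOpen.inter ?_ ?_)))
    · exact isOpen_lt continuous_const (continuous_fst.add (continuous_fst.comp continuous_snd))
    · exact isOpen_lt ((continuous_fst.comp continuous_snd).sub continuous_fst) continuous_const
    · exact isOpen_lt continuous_fst continuous_const
    · exact isOpen_lt continuous_const (continuous_snd.comp continuous_snd)
    · exact isOpen_lt (continuous_snd.comp continuous_snd) continuous_const
  have hnotin : (x t₀, y t₀, z t₀) ∉ prismD := by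
    rw [hopen.frontier_eq] at hbd
    exact hbd.2
  by_contra hne
  have hxlt : x t₀ < 0 := lt_of_le_of_ne hx₀le hne
  apply hnotin
  have hmem : (-(π/2) < x t₀ + y t₀ ∧ y t₀ - x t₀ < 3*π/2 ∧ x t₀ < 0) ∧ 0 < z t₀ ∧ z t₀ < π/2 :=
    ⟨⟨by linarith, by linarith [Real.pi_pos], hxlt⟩, by linarith, hzlt⟩
  simpa [prismD, triR, Set.mem_setOf_eq] using hmem
end

section
/- Let X = (x, y, z) : ℝ → ℝ³ be a solution of the 1-1-1 ABC flow system with x(0) = -π/2 and y(0) = 0. Then for every t ∈ ℝ one has x(-t) = -π - x(t), y(-t) = -y(t), and z(-t) = z(t). -/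
open Real Set Filter

/-- The ABC vector field on `ℝ × ℝ × ℝ`. -/
noncomputable def abcField : ℝ × ℝ × ℝ → ℝ × ℝ × ℝ := fun p =>
  (Real.sin p.2.2 + Real.cos p.2.1, Real.sin p.1 + Real.cos p.2.2,
    Real.sin p.2.1 + Real.cos p.1)

lemma lipschitzWith_sin' : LipschitzWith 1 Real.sin :=
  lipschitzWith_of_nnnorm_deriv_le Real.differentiable_sin fun x => by
    rw [Real.deriv_sin, ← NNReal.coe_le_coe, coe_nnnorm, Real.norm_eq_abs]
    simpa using Real.abs_cos_le_one x

lemma lipschitzWith_cos' : LipschitzWith 1 Real.cos :=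
  lipschitzWith_of_nnnorm_deriv_le Real.differentiable_cos fun x => by
    rw [Real.deriv_cos', ← NNReal.coe_le_coe, coe_nnnorm, Real.norm_eq_abs, abs_neg]
    simpa using Real.abs_sin_le_one x

lemma abcField_lipschitz : LipschitzWith 2 abcField := by
  have hfst : LipschitzWith 1 (Prod.fst : ℝ × ℝ × ℝ → ℝ) := LipschitzWith.prod_fst
  have hsnd1 : LipschitzWith 1 (fun p : ℝ × ℝ × ℝ => p.2.1) :=
    (LipschitzWith.prod_fst).comp LipschitzWith.prod_snd |>.weaken (by norm_num)
  have hsnd2 : LipschitzWith 1 (fun p : ℝ × ℝ × ℝ => p.2.2) :=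
    (LipschitzWith.prod_snd).comp LipschitzWith.prod_snd |>.weaken (by norm_num)
  have h1 : LipschitzWith 2 (fun p : ℝ × ℝ × ℝ => Real.sin p.2.2 + Real.cos p.2.1) := by
    have := (lipschitzWith_sin'.comp hsnd2).add (lipschitzWith_cos'.comp hsnd1)
    simpa [one_add_one_eq_two] using this
  have h2 : LipschitzWith 2 (fun p : ℝ × ℝ × ℝ => Real.sin p.1 + Real.cos p.2.2) := by
    have := (lipschitzWith_sin'.comp hfst).add (lipschitzWith_cos'.comp hsnd2)
    simpa [one_add_one_eq_two] using this
  have h3 : LipschitzWith 2 (fun p : ℝ × ℝ × ℝ => Real.sin p.2.1 + Real.cos p.1) := by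
    have := (lipschitzWith_sin'.comp hsnd1).add (lipschitzWith_cos'.comp hfst)
    simpa [one_add_one_eq_two] using this
  have := h1.prodMk (h2.prodMk h3)
  unfold abcField
  simpa [abcField, max_self] using this

theorem stmt15 (x y z : ℝ → ℝ) (h : IsABCSol x y z)
    (hx0 : x 0 = -(π / 2)) (hy0 : y 0 = 0) :
    ∀ t : ℝ, x (-t) = -π - x t ∧ y (-t) = -y t ∧ z (-t) = z t := by
  -- f and g are two solutions of the same ODE with the same value at 0
  set f : ℝ → ℝ × ℝ × ℝ := fun t => (x t, y t, z t) with hf_def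
  set g : ℝ → ℝ × ℝ × ℝ := fun t => (-π - x (-t), -y (-t), z (-t)) with hg_def
  have hf' : ∀ t : ℝ, HasDerivAt f (abcField (f t)) t := by
    intro t
    obtain ⟨hx, hy, hz⟩ := h t
    exact hx.prodMk (hy.prodMk hz)
  have hg' : ∀ t : ℝ, HasDerivAt g (abcField (g t)) t := by
    intro t
    obtain ⟨hx, hy, hz⟩ := h (-t)
    have hxc : HasDerivAt (fun s => x (-s)) (-(Real.sin (z (-t)) + Real.cos (y (-t)))) t := by
      simpa [Function.comp_def] using hx.comp t (hasDerivAt_neg t)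
    have hyc : HasDerivAt (fun s => y (-s)) (-(Real.sin (x (-t)) + Real.cos (z (-t)))) t := by
      simpa [Function.comp_def] using hy.comp t (hasDerivAt_neg t)
    have hzc : HasDerivAt (fun s => z (-s)) (-(Real.sin (y (-t)) + Real.cos (x (-t)))) t := by
      simpa [Function.comp_def] using hz.comp t (hasDerivAt_neg t)
    have h1 : HasDerivAt (fun s => -π - x (-s)) (Real.sin (z (-t)) + Real.cos (y (-t))) t := by
      simpa [Pi.sub_def] using (hasDerivAt_const t (-π)).sub hxc
    have h2 : HasDerivAt (fun s => -y (-s)) (Real.sin (x (-t)) + Real.cos (z (-t))) t := by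
      simpa [Pi.neg_def] using hyc.neg
    have hD := h1.prodMk (h2.prodMk hzc)
    have heq : ((Real.sin (z (-t)) + Real.cos (y (-t)), Real.sin (x (-t)) + Real.cos (z (-t)),
        -(Real.sin (y (-t)) + Real.cos (x (-t)))) : ℝ × ℝ × ℝ) = abcField (g t) := by
      simp only [abcField, hg_def]
      refine Prod.ext ?_ (Prod.ext ?_ ?_)
      · simp [Real.cos_neg]
      · have : (-π - x (-t)) = -(π + x (-t)) := by ring
        simp [this, Real.sin_neg, Real.sin_add]
      · have : (-π - x (-t)) = -(π + x (-t)) := by ring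
        simp [this, Real.sin_neg, Real.cos_neg, Real.cos_add]
        ring
    rw [heq] at hD
    exact hD
  have heq0 : f 0 = g 0 := by
    simp only [hf_def, hg_def, neg_zero]
    refine Prod.ext ?_ (Prod.ext ?_ rfl)
    · rw [hx0]; ring
    · rw [hy0]; ring
  have key : ∀ t : ℝ, f t = g t := by
    intro t
    have hmem : t ∈ Icc (-(|t| + 1)) (|t| + 1) :=
      ⟨by linarith [neg_abs_le t], by linarith [le_abs_self t]⟩
    have h0 : (0 : ℝ) ∈ Ioo (-(|t| + 1)) (|t| + 1) :=
      ⟨by linarith [abs_nonneg t], by linarith [abs_nonneg t]⟩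
    exact ODE_solution_unique_of_mem_Icc (s := fun _ => (univ : Set (ℝ × ℝ × ℝ)))
      (v := fun _ p => abcField p) (K := 2)
      (fun _ _ => abcField_lipschitz.lipschitzOnWith) h0
      (fun s _ => (hf' s).continuousAt.continuousWithinAt)
      (fun s _ => hf' s) (fun _ _ => trivial)
      (fun s _ => (hg' s).continuousAt.continuousWithinAt)
      (fun s _ => hg' s) (fun _ _ => trivial) heq0 hmem
  intro t
  have := key t
  simp only [hf_def, hg_def, Prod.mk.injEq] at this
  obtain ⟨h1, h2, h3⟩ := this
  exact ⟨by linarith, by linarith, h3.symm⟩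
end
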